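/- arXiv:1805.12119 — 5 statements merged into one kernel-verified Lean document; each statement's English description precedes it below -/
import Mathlib

section
/- A finite group G is a non-cyclic group of prime exponent if and only if its power graph 𝒢(G) is non-complete and minimally edge-connected. -/
open Subgroup

/-- The power graph of a group: distinct `u`, `v` are adjacent iff one is a
positive integer power of the other. -/
def powerGraph (G : Type*) [Group G] : SimpleGraph G where
  Adj u v := u ≠ v ∧ ((∃ n : ℕ, 0 < n ∧ v = u ^ n) ∨ (∃ m : ℕ, 0 < m ∧ u = v ^ m))
  symm := ⟨fun u v h => ⟨h.1.symm, h.2.symm⟩⟩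
  loopless := ⟨fun u h => h.1 rfl⟩

/-- The degree of a vertex in a graph. -/
noncomputable def gDegree {V : Type*} (Γ : SimpleGraph V) (x : V) : ℕ :=
  (Γ.neighborSet x).ncard

/-- The minimum degree δ(Γ) of a graph. -/
noncomputable def gMinDegree {V : Type*} (Γ : SimpleGraph V) : ℕ :=
  sInf (Set.range (gDegree Γ))

/-- The edge-connectivity κ'(Γ): the least size of a set of edges whose deletion
disconnects the graph. -/
noncomputable def edgeConn {V : Type*} (Γ : SimpleGraph V) : ℕ :=
  sInf {k | ∃ s : Finset (Sym2 V), s.card = k ∧ ↑s ⊆ Γ.edgeSet ∧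
    ¬ (Γ.deleteEdges ↑s).Connected}

/-- The vertex connectivity κ(Γ): the least size of a set of vertices whose deletion
disconnects the graph or leaves at most one vertex. -/
noncomputable def vertConn {V : Type*} (Γ : SimpleGraph V) : ℕ :=
  sInf {k | ∃ S : Set V, S.Finite ∧ S.ncard = k ∧
    (¬ (Γ.induce Sᶜ).Preconnected ∨ Sᶜ.Subsingleton)}

/-- A nontrivial connected graph is minimally edge-connected if deleting any edge
drops the edge-connectivity by exactly one. -/
def MinimallyEdgeConnected {V : Type*} (Γ : SimpleGraph V) : Prop :=
  Nontrivial V ∧ Γ.Connected ∧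
    ∀ e ∈ Γ.edgeSet, edgeConn (Γ.deleteEdges {e}) = edgeConn Γ - 1

/-- A nontrivial connected graph is minimally connected if deleting any edge
drops the vertex connectivity by exactly one. -/
def MinimallyConnected {V : Type*} (Γ : SimpleGraph V) : Prop :=
  Nontrivial V ∧ Γ.Connected ∧
    ∀ e ∈ Γ.edgeSet, vertConn (Γ.deleteEdges {e}) = vertConn Γ - 1

/-- `S` is a separating set of `Γ` if deleting the vertices of `S` leaves a
disconnected graph. -/
def IsSeparatingSet {V : Type*} (Γ : SimpleGraph V) (S : Set V) : Prop :=
  ¬ (Γ.induce Sᶜ).Preconnected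

/-- `S` is a minimum separating set of `Γ`. -/
def IsMinSeparatingSet {V : Type*} (Γ : SimpleGraph V) (S : Set V) : Prop :=
  IsSeparatingSet Γ S ∧ ∀ T : Set V, IsSeparatingSet Γ T → S.ncard ≤ T.ncard

/-- `y` generates a maximal cyclic subgroup of `G`: the cyclic subgroup `⟨y⟩` is
not properly contained in any cyclic subgroup. -/
def IsMaxCyclicGen {G : Type*} [Group G] (y : G) : Prop :=
  ∀ z : G, zpowers y ≤ zpowers z → zpowers y = zpowers z

/-- A subgroup is maximal cyclic if it is cyclic and not properly contained in
any cyclic subgroup. -/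
def IsMaximalCyclicSubgroup {G : Type*} [Group G] (H : Subgroup G) : Prop :=
  (∃ y : G, H = zpowers y) ∧ ∀ z : G, H ≤ zpowers z → H = zpowers z


set_option linter.unusedSectionVars false
set_option linter.unusedVariables false
set_option maxHeartbeats 1600000

section AuxGraph
variable {V : Type*} [Fintype V] {Γ : SimpleGraph V}

lemma minDeg_le (Γ : SimpleGraph V) (x : V) : gMinDegree Γ ≤ gDegree Γ x :=
  Nat.sInf_le ⟨x, rfl⟩

lemma exists_minDeg [Nonempty V] (Γ : SimpleGraph V) : ∃ x, gDegree Γ x = gMinDegree Γ :=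
  Nat.sInf_mem (Set.range_nonempty _)

lemma le_minDeg [Nonempty V] {k : ℕ} (h : ∀ x, k ≤ gDegree Γ x) : k ≤ gMinDegree Γ := by
  obtain ⟨x, hx⟩ := exists_minDeg Γ
  exact hx ▸ h x

lemma gDegree_eq_degree (Γ : SimpleGraph V) [DecidableRel Γ.Adj] (x : V) :
    gDegree Γ x = Γ.degree x := by
  rw [gDegree, ← SimpleGraph.card_neighborFinset_eq_degree]
  rw [SimpleGraph.neighborFinset_def, Set.ncard_eq_toFinset_card']

lemma eq_of_reachable_of_isolated {Γ : SimpleGraph V} {x : V} (h : ∀ z, ¬ Γ.Adj x z) {y : V}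
    (hr : Γ.Reachable x y) : x = y := by
  obtain ⟨w⟩ := hr
  cases w with
  | nil => rfl
  | cons h' _ => exact absurd h' (h _)

lemma not_connected_of_isolated {Γ : SimpleGraph V} {x y : V} (h : ∀ z, ¬ Γ.Adj x z)
    (hxy : x ≠ y) : ¬ Γ.Connected := fun hc => hxy (eq_of_reachable_of_isolated h (hc.preconnected x y))

lemma connected_of_forall_reachable {Γ : SimpleGraph V} (u : V) (h : ∀ v, Γ.Reachable u v) :
    Γ.Connected := by
  have : Nonempty V := ⟨u⟩
  exact ⟨fun a b => (h a).symm.trans (h b)⟩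

lemma cut_set_nonempty [Nontrivial V] (Γ : SimpleGraph V) :
    {k | ∃ s : Finset (Sym2 V), s.card = k ∧ ↑s ⊆ Γ.edgeSet ∧
      ¬ (Γ.deleteEdges ↑s).Connected}.Nonempty := by
  classical
  obtain ⟨x, y, hxy⟩ := exists_pair_ne V
  refine ⟨Γ.edgeFinset.card, Γ.edgeFinset, rfl, by simp, ?_⟩
  refine not_connected_of_isolated (x := x) (y := y) (fun z hz => ?_) hxy
  rw [SimpleGraph.deleteEdges_adj] at hz
  exact hz.2 (by simpa using hz.1)

lemma edgeConn_le_card {s : Finset (Sym2 V)} (h1 : ↑s ⊆ Γ.edgeSet)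
    (h2 : ¬ (Γ.deleteEdges ↑s).Connected) : edgeConn Γ ≤ s.card :=
  Nat.sInf_le ⟨s, rfl, h1, h2⟩

lemma exists_min_cut [Nontrivial V] (Γ : SimpleGraph V) :
    ∃ s : Finset (Sym2 V), s.card = edgeConn Γ ∧ ↑s ⊆ Γ.edgeSet ∧
      ¬ (Γ.deleteEdges ↑s).Connected :=
  Nat.sInf_mem (cut_set_nonempty Γ)

lemma le_edgeConn [Nontrivial V] {k : ℕ}
    (h : ∀ s : Finset (Sym2 V), ↑s ⊆ Γ.edgeSet → ¬ (Γ.deleteEdges ↑s).Connected → k ≤ s.card) :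
    k ≤ edgeConn Γ := by
  obtain ⟨s, hc, h1, h2⟩ := exists_min_cut Γ
  exact hc ▸ h s h1 h2

lemma edgeConn_le_gDegree [Nontrivial V] (Γ : SimpleGraph V) (x : V) :
    edgeConn Γ ≤ gDegree Γ x := by
  classical
  set s : Finset (Sym2 V) := (Γ.neighborFinset x).image (fun z => s(x, z)) with hs
  have hcard : s.card = gDegree Γ x := by
    rw [hs, Finset.card_image_of_injOn, gDegree_eq_degree, SimpleGraph.card_neighborFinset_eq_degree]
    intro a ha b hb hab
    rcases Sym2.eq_iff.1 hab with ⟨_, h2⟩ | ⟨h1, h2⟩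
    · exact h2
    · exfalso
      rw [Finset.mem_coe, SimpleGraph.mem_neighborFinset] at ha
      exact Γ.ne_of_adj ha h2.symm
  have hsub : ↑s ⊆ Γ.edgeSet := by
    intro e he
    simp only [hs, Finset.coe_image, Set.mem_image, Finset.mem_coe,
      SimpleGraph.mem_neighborFinset] at he
    obtain ⟨z, hz, rfl⟩ := he
    exact hz
  have hiso : ∀ z, ¬ (Γ.deleteEdges ↑s).Adj x z := by
    intro z hz
    rw [SimpleGraph.deleteEdges_adj] at hz
    refine hz.2 ?_
    simp only [hs, Finset.coe_image, Set.mem_image, Finset.mem_coe, SimpleGraph.mem_neighborFinset]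
    exact ⟨z, hz.1, rfl⟩
  obtain ⟨y, hy⟩ := exists_ne x
  exact hcard ▸ edgeConn_le_card hsub (not_connected_of_isolated hiso hy.symm)

lemma reach_in_block {Γ : SimpleGraph V} {M : Set V}
    (hM : ∀ a ∈ M, ∀ b ∈ M, a ≠ b → Γ.Adj a b)
    (S : Finset (Sym2 V)) (hS : S.card + 2 ≤ M.ncard) :
    ∀ u ∈ M, ∀ v ∈ M, (Γ.deleteEdges ↑S).Reachable u v := by
  classical
  intro u hu v hv
  rcases eq_or_ne u v with rfl | huv
  · exact SimpleGraph.Reachable.refl u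
  by_cases he : s(u, v) ∈ S
  swap
  · exact (SimpleGraph.deleteEdges_adj.2 ⟨hM u hu v hv huv, he⟩).reachable
  by_cases hw : ∃ w ∈ M, w ≠ u ∧ w ≠ v ∧ s(u, w) ∉ S ∧ s(w, v) ∉ S
  · obtain ⟨w, hwM, hwu, hwv, h1, h2⟩ := hw
    exact ((SimpleGraph.deleteEdges_adj.2 ⟨hM u hu w hwM (Ne.symm hwu), h1⟩).reachable).trans
      (SimpleGraph.deleteEdges_adj.2 ⟨hM w hwM v hv hwv, h2⟩).reachable
  exfalso
  push_neg at hw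
  set f : V → Sym2 V := fun w => if s(u, w) ∈ S then s(u, w) else s(w, v) with hf
  have hmaps : ∀ w ∈ M \ {u, v}, f w ∈ (↑S : Set (Sym2 V)) \ {s(u, v)} := by
    intro w hw'
    obtain ⟨hwM, hww⟩ := hw'
    simp only [Set.mem_insert_iff, Set.mem_singleton_iff, not_or] at hww
    obtain ⟨hwu, hwv⟩ := hww
    by_cases h1 : s(u, w) ∈ S
    · refine ⟨by simp [hf, h1], ?_⟩
      simp only [hf, if_pos h1, Set.mem_singleton_iff]
      intro hc
      rcases Sym2.eq_iff.1 hc with ⟨_, h⟩ | ⟨h1', _⟩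
      · exact hwv h
      · exact huv h1'
    · have h2 : s(w, v) ∈ S := hw w hwM hwu hwv h1
      refine ⟨by simp [hf, h1, h2], ?_⟩
      simp only [hf, if_neg h1, Set.mem_singleton_iff]
      intro hc
      rcases Sym2.eq_iff.1 hc with ⟨h, _⟩ | ⟨h1', h2'⟩
      · exact hwu h
      · exact hwv h1'
  have hinj : Set.InjOn f (M \ {u, v}) := by
    intro a ha b hb hab
    obtain ⟨-, ha2⟩ := ha; obtain ⟨-, hb2⟩ := hb
    simp only [Set.mem_insert_iff, Set.mem_singleton_iff, not_or] at ha2 hb2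
    simp only [hf] at hab
    split_ifs at hab with h1 h2 h2
    · rcases Sym2.eq_iff.1 hab with ⟨_, h⟩ | ⟨h', h''⟩
      · exact h
      · exact absurd h'' ha2.1
    · rcases Sym2.eq_iff.1 hab with ⟨_, h⟩ | ⟨h', h''⟩
      · exact absurd h ha2.2
      · exact absurd h' huv
    · rcases Sym2.eq_iff.1 hab with ⟨h, h'⟩ | ⟨h', h''⟩
      · exact absurd h ha2.1
      · exact h'
    · rcases Sym2.eq_iff.1 hab with ⟨h, _⟩ | ⟨h', h''⟩
      · exact h
      · exact absurd h' ha2.2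
  have hle : (M \ {u, v}).ncard ≤ ((↑S : Set (Sym2 V)) \ {s(u, v)}).ncard := by
    rw [← Set.ncard_image_of_injOn hinj]
    exact Set.ncard_le_ncard (fun e he' => by
      obtain ⟨w, hw', rfl⟩ := he'; exact hmaps w hw') (Set.toFinite _)
  have h2 : (M \ {u, v}).ncard = M.ncard - 2 := by
    rw [Set.ncard_diff (by
      intro z hz
      rcases hz with rfl | hz
      · exact hu
      · exact (Set.mem_singleton_iff.1 hz) ▸ hv), Set.ncard_pair huv]
  have h3 : ((↑S : Set (Sym2 V)) \ {s(u, v)}).ncard = S.card - 1 := by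
    rw [Set.ncard_diff_singleton_of_mem (by exact_mod_cast he), Set.ncard_coe_finset]
  have hpos : 1 ≤ S.card := Finset.card_pos.2 ⟨_, he⟩
  omega

lemma edgeConn_deleteEdges_ge [Nontrivial V] (Γ : SimpleGraph V) {e : Sym2 V}
    (he : e ∈ Γ.edgeSet) :
    edgeConn Γ ≤ edgeConn (Γ.deleteEdges {e}) + 1 := by
  classical
  obtain ⟨s, hc, h1, h2⟩ := exists_min_cut (Γ.deleteEdges {e})
  have hsub : ↑(insert e s) ⊆ Γ.edgeSet := by
    intro a ha
    rcases Finset.mem_insert.1 (by exact_mod_cast ha) with rfl | h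
    · exact he
    · exact ((SimpleGraph.edgeSet_deleteEdges {e}) ▸ h1 (by exact_mod_cast h)).1
  have hgr : Γ.deleteEdges ↑(insert e s) = (Γ.deleteEdges {e}).deleteEdges ↑s := by
    rw [SimpleGraph.deleteEdges_deleteEdges]
    congr 1
    rw [Finset.coe_insert, Set.insert_eq]
  calc edgeConn Γ ≤ (insert e s).card := edgeConn_le_card hsub (hgr ▸ h2)
    _ ≤ s.card + 1 := Finset.card_insert_le _ _
    _ = edgeConn (Γ.deleteEdges {e}) + 1 := by rw [hc]

lemma plesnik [Nontrivial V] (Γ : SimpleGraph V) (u : V) (hu : ∀ v, v ≠ u → Γ.Adj u v) :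
    edgeConn Γ = gMinDegree Γ := by
  classical
  refine le_antisymm ?_ ?_
  · obtain ⟨x, hx⟩ := exists_minDeg Γ
    exact hx ▸ edgeConn_le_gDegree Γ x
  · refine le_edgeConn (fun s hs hdis => ?_)
    by_contra hlt
    push_neg at hlt
    set H := Γ.deleteEdges (↑s : Set (Sym2 V)) with hH
    set B : Finset V := Finset.univ.filter (fun v => ¬ H.Reachable u v) with hB
    have hBne : B.Nonempty := by
      by_contra hemp
      refine hdis (connected_of_forall_reachable u (fun v => ?_))
      by_contra hr
      have hv : v ∈ B := Finset.mem_filter.2 ⟨Finset.mem_univ v, hr⟩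
      rw [Finset.not_nonempty_iff_eq_empty.1 hemp] at hv
      exact absurd hv (Finset.notMem_empty v)
    have huB : u ∉ B := fun h => (Finset.mem_filter.1 h).2 (SimpleGraph.Reachable.refl u)
    have hreach : ∀ c, c ∉ B → H.Reachable u c := by
      intro c hc
      by_contra hr
      exact hc (Finset.mem_filter.2 ⟨Finset.mem_univ c, hr⟩)
    have hcut : ∀ b ∈ B, ∀ c, c ∉ B → Γ.Adj b c → s(b, c) ∈ s := by
      intro b hb c hc hadj
      by_contra hns
      have hH' : H.Adj c b := SimpleGraph.deleteEdges_adj.2 ⟨hadj.symm, by rwa [Sym2.eq_swap]⟩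
      exact (Finset.mem_filter.1 hb).2 ((hreach c hc).trans hH'.reachable)
    set F : V → Finset (Sym2 V) :=
      fun b => ((Γ.neighborFinset b).filter (fun c => c ∉ B)).image (fun c => s(b, c)) with hF
    have hFsub : ∀ b ∈ B, F b ⊆ s := by
      intro b hb e he
      simp only [hF, Finset.mem_image, Finset.mem_filter, SimpleGraph.mem_neighborFinset] at he
      obtain ⟨c, ⟨hadj, hc⟩, rfl⟩ := he
      exact hcut b hb c hc hadj
    have hFcard : ∀ b ∈ B, (F b).card = ((Γ.neighborFinset b).filter (fun c => c ∉ B)).card := by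
      intro b hb
      refine Finset.card_image_of_injOn ?_
      intro a ha a' ha' haa
      simp only [Finset.coe_filter, Set.mem_setOf_eq, SimpleGraph.mem_neighborFinset] at ha ha'
      rcases Sym2.eq_iff.1 haa with ⟨_, h⟩ | ⟨h1, h2⟩
      · exact h
      · exact absurd (h1 ▸ hb) ha'.2
    have hdisj : ∀ x ∈ B, ∀ y ∈ B, x ≠ y → Disjoint (F x) (F y) := by
      intro x hx y hy hxy
      rw [Finset.disjoint_left]
      intro e hex hey
      simp only [hF, Finset.mem_image, Finset.mem_filter, SimpleGraph.mem_neighborFinset]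
        at hex hey
      obtain ⟨c, ⟨_, hc⟩, rfl⟩ := hex
      obtain ⟨c', ⟨_, hc'⟩, he⟩ := hey
      rcases Sym2.eq_iff.1 he with ⟨h1, _⟩ | ⟨h1, _⟩
      · exact hxy (h1.symm)
      · exact hc (h1 ▸ hy)
    have hsum : ∑ b ∈ B, (F b).card ≤ s.card := by
      rw [← Finset.card_biUnion hdisj]
      exact Finset.card_le_card (fun e he => by
        obtain ⟨b, hb, hbe⟩ := Finset.mem_biUnion.1 he
        exact hFsub b hb hbe)
    have hdegsplit : ∀ b ∈ B,
        gDegree Γ b ≤ ((Γ.neighborFinset b).filter (fun c => c ∉ B)).card + (B.card - 1) := by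
      intro b hb
      have hsplit := Finset.card_filter_add_card_filter_not
        (s := Γ.neighborFinset b) (p := fun c => c ∈ B)
      have hsub2 : (Γ.neighborFinset b).filter (fun c => c ∈ B) ⊆ B.erase b := by
        intro c hc
        simp only [Finset.mem_filter, SimpleGraph.mem_neighborFinset] at hc
        exact Finset.mem_erase.2 ⟨fun h => Γ.ne_of_adj hc.1 h.symm, hc.2⟩
      have hle2 : ((Γ.neighborFinset b).filter (fun c => c ∈ B)).card ≤ B.card - 1 := by
        refine le_trans (Finset.card_le_card hsub2) ?_
        rw [Finset.card_erase_of_mem hb]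
      rw [gDegree_eq_degree, ← SimpleGraph.card_neighborFinset_eq_degree, ← hsplit]
      omega
    have hone : ∀ b ∈ B, 1 ≤ ((Γ.neighborFinset b).filter (fun c => c ∉ B)).card := by
      intro b hb
      refine Finset.card_pos.2 ⟨u, Finset.mem_filter.2 ⟨?_, huB⟩⟩
      rw [SimpleGraph.mem_neighborFinset]
      exact (hu b (fun h => huB (h ▸ hb))).symm
    set δ := gMinDegree Γ with hδ
    have hdegB : ∀ b ∈ B, δ ≤ gDegree Γ b := fun b _ => minDeg_le Γ b
    set β := B.card with hβ
    have hβ1 : 1 ≤ β := Finset.card_pos.2 hBne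
    by_cases hcase : β ≤ δ
    · have hlow : ∀ b ∈ B, δ + 1 - β ≤ (F b).card := by
        intro b hb
        rw [hFcard b hb]
        have := hdegsplit b hb
        have := hdegB b hb
        omega
      have := Finset.card_nsmul_le_sum B (fun b => (F b).card) (δ + 1 - β) hlow
      rw [smul_eq_mul, ← hβ] at this
      have hfin : δ ≤ β * (δ + 1 - β) := by
        have h1 : β * (δ + 1 - β) = β * (δ - β) + β := by
          have : δ + 1 - β = (δ - β) + 1 := by omega
          rw [this, Nat.mul_add, Nat.mul_one]
        have h2 : δ - β ≤ β * (δ - β) := Nat.le_mul_of_pos_left _ hβ1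
        omega
      omega
    · have hlow : ∀ b ∈ B, 1 ≤ (F b).card := by
        intro b hb
        rw [hFcard b hb]; exact hone b hb
      have := Finset.card_nsmul_le_sum B (fun b => (F b).card) 1 hlow
      rw [smul_eq_mul, Nat.mul_one] at this
      omega

lemma neighborSet_deleteEdges (Γ : SimpleGraph V) (s : Set (Sym2 V)) (w : V) :
    (Γ.deleteEdges s).neighborSet w = {z | z ∈ Γ.neighborSet w ∧ s(w, z) ∉ s} := by
  ext z
  simp [SimpleGraph.deleteEdges_adj, SimpleGraph.mem_neighborSet]

lemma gDegree_deleteEdges_not_mem {Γ : SimpleGraph V} {e : Sym2 V} {w : V} (hw : w ∉ e) :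
    gDegree (Γ.deleteEdges {e}) w = gDegree Γ w := by
  unfold gDegree
  congr 1
  rw [neighborSet_deleteEdges]
  ext z
  simp only [Set.mem_setOf_eq, Set.mem_singleton_iff]
  constructor
  · exact fun h => h.1
  · intro h
    refine ⟨h, fun hc => hw ?_⟩
    rw [← hc]
    exact Sym2.mem_mk_left w z

lemma gDegree_deleteEdges_mem {Γ : SimpleGraph V} {a b : V} (h : Γ.Adj a b) :
    gDegree (Γ.deleteEdges {s(a, b)}) a = gDegree Γ a - 1 := by
  unfold gDegree
  rw [neighborSet_deleteEdges]
  have hset : {z | z ∈ Γ.neighborSet a ∧ s(a, z) ∉ ({s(a, b)} : Set (Sym2 V))} =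
      Γ.neighborSet a \ {b} := by
    ext z
    simp only [Set.mem_setOf_eq, Set.mem_singleton_iff, Set.mem_diff]
    constructor
    · rintro ⟨hz, hne⟩
      exact ⟨hz, fun hzb => hne (by rw [hzb])⟩
    · rintro ⟨hz, hne⟩
      refine ⟨hz, fun hc => ?_⟩
      rcases Sym2.eq_iff.1 hc with ⟨_, h1⟩ | ⟨h1, _⟩
      · exact hne h1
      · exact h.ne h1
  have hb : b ∈ Γ.neighborSet a := h
  rw [hset, Set.ncard_diff_singleton_of_mem hb]

end AuxGraph

section AuxGroup
variable {G : Type*} [Group G] [Fintype G]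

lemma exists_pos_pow_of_mem_zpowers {u v : G} (h : v ∈ zpowers u) :
    ∃ n : ℕ, 0 < n ∧ v = u ^ n := by
  rw [← mem_powers_iff_mem_zpowers] at h
  obtain ⟨n, hn⟩ := (Submonoid.mem_powers_iff v u).1 h
  rcases Nat.eq_zero_or_pos n with rfl | hpos
  · exact ⟨orderOf u, orderOf_pos u, by rw [pow_orderOf_eq_one, ← hn, pow_zero]⟩
  · exact ⟨n, hpos, hn.symm⟩

lemma pg_adj {u v : G} :
    (powerGraph G).Adj u v ↔ u ≠ v ∧ (u ∈ zpowers v ∨ v ∈ zpowers u) := by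
  constructor
  · rintro ⟨hne, ⟨n, _, rfl⟩ | ⟨n, _, rfl⟩⟩
    · exact ⟨hne, Or.inr ⟨(n : ℤ), (zpow_natCast u n).symm ▸ rfl⟩⟩
    · exact ⟨hne, Or.inl ⟨(n : ℤ), (zpow_natCast v n).symm ▸ rfl⟩⟩
  · rintro ⟨hne, h | h⟩
    · obtain ⟨n, hn, he⟩ := exists_pos_pow_of_mem_zpowers h
      exact ⟨hne, Or.inr ⟨n, hn, he⟩⟩
    · obtain ⟨n, hn, he⟩ := exists_pos_pow_of_mem_zpowers h
      exact ⟨hne, Or.inl ⟨n, hn, he⟩⟩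

lemma pg_adj_one {v : G} (hv : v ≠ 1) : (powerGraph G).Adj 1 v :=
  pg_adj.2 ⟨fun h => hv h.symm, Or.inl (one_mem _)⟩

lemma pg_connected : (powerGraph G).Connected := by
  have : Nonempty G := ⟨1⟩
  refine ⟨fun a b => ?_⟩
  have h1 : ∀ v : G, (powerGraph G).Reachable 1 v := by
    intro v
    rcases eq_or_ne v 1 with rfl | hv
    · exact SimpleGraph.Reachable.refl 1
    · exact (pg_adj_one hv).reachable
  exact (h1 a).symm.trans (h1 b)

lemma zpowers_inv_eq (a : G) : zpowers a⁻¹ = zpowers a :=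
  le_antisymm (zpowers_le.2 (inv_mem (mem_zpowers a)))
    (zpowers_le.2 (by simpa using inv_mem (mem_zpowers a⁻¹)))

lemma zpowers_coe_ncard (a : G) : ((zpowers a : Subgroup G) : Set G).ncard = orderOf a := by
  rw [← Nat.card_zpowers]
  exact (Nat.card_coe_set_eq _).symm

lemma exists_maxgen (x : G) : ∃ z : G, x ∈ zpowers z ∧ IsMaxCyclicGen z := by
  classical
  obtain ⟨z, hz, hmax⟩ := Finset.exists_max_image
    (Finset.univ.filter (fun z : G => x ∈ zpowers z)) (fun z => orderOf z)
    ⟨x, Finset.mem_filter.2 ⟨Finset.mem_univ x, mem_zpowers x⟩⟩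
  refine ⟨z, (Finset.mem_filter.1 hz).2, fun w hw => ?_⟩
  have hxw : x ∈ zpowers w := hw (Finset.mem_filter.1 hz).2
  have hcard : orderOf w ≤ orderOf z :=
    hmax w (Finset.mem_filter.2 ⟨Finset.mem_univ w, hxw⟩)
  have hset : ((zpowers z : Subgroup G) : Set G) = ((zpowers w : Subgroup G) : Set G) :=
    Set.eq_of_subset_of_ncard_le hw
      (by rw [zpowers_coe_ncard, zpowers_coe_ncard]; exact hcard) (Set.toFinite _)
  exact SetLike.ext' hset

lemma roots_eq (g : G) {d : ℕ} (hd : d ∣ orderOf g) (hd0 : 0 < d) :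
    {z : G | z ∈ zpowers g ∧ z ^ d = 1} = ((zpowers (g ^ (orderOf g / d)) : Subgroup G) : Set G) := by
  obtain ⟨m, hm⟩ := hd
  have hmne : (m : ℤ) ≠ 0 := by
    have : orderOf g ≠ 0 := (orderOf_pos g).ne'
    intro h
    exact this (by rw [hm, (by exact_mod_cast h : m = 0), Nat.mul_zero])
  have hdiv : orderOf g / d = m := by rw [hm]; exact Nat.mul_div_cancel_left m hd0
  ext z
  simp only [Set.mem_setOf_eq, SetLike.mem_coe, mem_zpowers_iff]
  constructor
  · rintro ⟨⟨t, rfl⟩, hz⟩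
    have hdvd : (orderOf g : ℤ) ∣ t * d := by
      rw [orderOf_dvd_iff_zpow_eq_one, zpow_mul]
      exact_mod_cast hz
    have hmt : (m : ℤ) ∣ t := by
      obtain ⟨c, hc⟩ := hdvd
      refine ⟨c, ?_⟩
      have hd' : (d : ℤ) ≠ 0 := by exact_mod_cast hd0.ne'
      have : t * d = m * c * d := by
        rw [hc] at *
        push_cast [hm] at hc ⊢
        linarith [hc]
      exact mul_right_cancel₀ hd' this
    obtain ⟨c, rfl⟩ := hmt
    refine ⟨c, ?_⟩
    rw [hdiv, ← zpow_natCast, ← zpow_mul]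
  · rintro ⟨k, rfl⟩
    constructor
    · exact ⟨(orderOf g / d : ℕ) * k, by rw [zpow_mul, zpow_natCast]⟩
    · rw [← zpow_natCast, ← zpow_mul, ← zpow_natCast g, ← zpow_mul]
      rw [hdiv]
      have : (m : ℤ) * (k * d) = (orderOf g : ℤ) * k := by
        push_cast [hm]
        ring
      rw [this, zpow_mul, zpow_natCast, pow_orderOf_eq_one, one_zpow]

lemma orderOf_pow_div (g : G) {d : ℕ} (hd : d ∣ orderOf g) (hd0 : 0 < d) :
    orderOf (g ^ (orderOf g / d)) = d := by
  rw [orderOf_pow, Nat.gcd_eq_right (Nat.div_dvd_of_dvd hd), Nat.div_div_self hd (orderOf_pos g).ne']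

lemma mem_zpowers_of_orderOf_dvd {g z w : G} (hz : z ∈ zpowers g) (hw : w ∈ zpowers g)
    (hdvd : orderOf z ∣ orderOf w) : z ∈ zpowers w := by
  have hw0 : 0 < orderOf w := orderOf_pos w
  have hwg : orderOf w ∣ orderOf g := orderOf_dvd_of_mem_zpowers hw
  have hzK : z ∈ ((zpowers (g ^ (orderOf g / orderOf w)) : Subgroup G) : Set G) := by
    rw [← roots_eq g hwg hw0]
    exact ⟨hz, orderOf_dvd_iff_pow_eq_one.1 hdvd⟩
  have hwK : zpowers w ≤ zpowers (g ^ (orderOf g / orderOf w)) := by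
    rw [zpowers_le]
    have : w ∈ {z : G | z ∈ zpowers g ∧ z ^ orderOf w = 1} := ⟨hw, pow_orderOf_eq_one w⟩
    rw [roots_eq g hwg hw0] at this
    exact this
  have hcards : ((zpowers (g ^ (orderOf g / orderOf w)) : Subgroup G) : Set G).ncard ≤
      ((zpowers w : Subgroup G) : Set G).ncard := by
    rw [zpowers_coe_ncard, zpowers_coe_ncard, orderOf_pow_div g hwg hw0]
  have : ((zpowers w : Subgroup G) : Set G) = _ :=
    Set.eq_of_subset_of_ncard_le hwK hcards (Set.toFinite _)
  rw [SetLike.ext' this]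
  exact hzK

lemma maxgen_neighborSet {y : G} (hy : IsMaxCyclicGen y) :
    (powerGraph G).neighborSet y = ((zpowers y : Subgroup G) : Set G) \ {y} := by
  ext z
  simp only [SimpleGraph.mem_neighborSet, Set.mem_diff, SetLike.mem_coe, Set.mem_singleton_iff]
  constructor
  · intro hz
    obtain ⟨hne, h | h⟩ := pg_adj.1 hz
    · have heq := hy z (zpowers_le.2 h)
      exact ⟨heq ▸ mem_zpowers z, fun hc => hne hc.symm⟩
    · exact ⟨h, fun hc => hne hc.symm⟩
  · rintro ⟨hmem, hne⟩
    exact pg_adj.2 ⟨fun h => hne h.symm, Or.inr hmem⟩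

lemma maxgen_gDegree {y : G} (hy : IsMaxCyclicGen y) :
    gDegree (powerGraph G) y = orderOf y - 1 := by
  rw [gDegree, maxgen_neighborSet hy, Set.ncard_diff_singleton_of_mem (mem_zpowers y),
    zpowers_coe_ncard]

lemma pg_minDeg_pos [Nontrivial G] : 1 ≤ gMinDegree (powerGraph G) := by
  refine le_minDeg (fun x => ?_)
  rw [gDegree]
  rcases eq_or_ne x 1 with rfl | hx
  · obtain ⟨y, hy⟩ := exists_ne (1 : G)
    exact (Set.ncard_pos (Set.toFinite _)).2 ⟨y, pg_adj_one hy⟩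
  · exact (Set.ncard_pos (Set.toFinite _)).2 ⟨1, (pg_adj_one hx).symm⟩

lemma deg_eq_min (hME : MinimallyEdgeConnected (powerGraph G)) {v : G} (hv : 3 ≤ orderOf v) :
    gDegree (powerGraph G) v = gMinDegree (powerGraph G) := by
  classical
  have hNT : Nontrivial G := hME.1
  set Γ := powerGraph G with hΓ
  have hv1 : v ≠ 1 := by
    intro h
    rw [h, orderOf_one] at hv
    omega
  have hvinv : v ≠ v⁻¹ := by
    intro h
    have h2 : v ^ 2 = 1 := by
      rw [pow_two]
      nth_rewrite 2 [h]
      exact mul_inv_cancel v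
    have := Nat.le_of_dvd (by norm_num) (orderOf_dvd_of_pow_eq_one h2)
    omega
  have hvinv1 : v⁻¹ ≠ 1 := fun h => hv1 (by rwa [inv_eq_one] at h)
  have hadj : Γ.Adj v v⁻¹ := pg_adj.2 ⟨hvinv, Or.inr (inv_mem (mem_zpowers v))⟩
  set e : Sym2 G := s(v, v⁻¹) with he
  have heE : e ∈ Γ.edgeSet := hadj
  have hNv : Γ.neighborSet v = {z : G | v ∈ zpowers z ∨ z ∈ zpowers v} \ {v} := by
    ext z
    simp only [SimpleGraph.mem_neighborSet, Set.mem_diff, Set.mem_setOf_eq,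
      Set.mem_singleton_iff]
    rw [hΓ, pg_adj]
    constructor
    · rintro ⟨hne, h⟩
      exact ⟨h, fun hc => hne hc.symm⟩
    · rintro ⟨h, hne⟩
      exact ⟨fun hc => hne hc.symm, h⟩
  have hNvi : Γ.neighborSet v⁻¹ = {z : G | v ∈ zpowers z ∨ z ∈ zpowers v} \ {v⁻¹} := by
    ext z
    simp only [SimpleGraph.mem_neighborSet, Set.mem_diff, Set.mem_setOf_eq,
      Set.mem_singleton_iff]
    rw [hΓ, pg_adj]
    constructor
    · rintro ⟨hne, h | h⟩
      · exact ⟨Or.inl ((inv_mem_iff).1 h), fun hc => hne hc.symm⟩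
      · exact ⟨Or.inr (by rwa [zpowers_inv_eq] at h), fun hc => hne hc.symm⟩
    · rintro ⟨h | h, hne⟩
      · exact ⟨fun hc => hne hc.symm, Or.inl ((inv_mem_iff).2 h)⟩
      · exact ⟨fun hc => hne hc.symm, Or.inr (by rwa [zpowers_inv_eq])⟩
  have hvP : v ∈ {z : G | v ∈ zpowers z ∨ z ∈ zpowers v} := Or.inr (mem_zpowers v)
  have hviP : v⁻¹ ∈ {z : G | v ∈ zpowers z ∨ z ∈ zpowers v} :=
    Or.inr (inv_mem (mem_zpowers v))
  have hdeg_eq : gDegree Γ v = gDegree Γ v⁻¹ := by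
    rw [gDegree, gDegree, hNv, hNvi, Set.ncard_diff_singleton_of_mem hvP,
      Set.ncard_diff_singleton_of_mem hviP]
  have hmin := hME.2.2 e heE
  have h1 : edgeConn Γ = gMinDegree Γ := plesnik Γ 1 (fun w hw => pg_adj_one hw)
  have huniv2 : ∀ w : G, w ≠ 1 → (Γ.deleteEdges {e}).Adj 1 w := by
    intro w hw
    rw [SimpleGraph.deleteEdges_adj]
    refine ⟨pg_adj_one hw, ?_⟩
    simp only [Set.mem_singleton_iff, he]
    intro hc
    rcases Sym2.eq_iff.1 hc with ⟨h1', _⟩ | ⟨h1', _⟩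
    · exact hv1 h1'.symm
    · exact hvinv1 h1'.symm
  have h2 : edgeConn (Γ.deleteEdges {e}) = gMinDegree (Γ.deleteEdges {e}) :=
    plesnik _ 1 huniv2
  have hpos : 1 ≤ gMinDegree Γ := pg_minDeg_pos
  by_contra hne
  have hgt : gMinDegree Γ + 1 ≤ gDegree Γ v := by
    have := minDeg_le Γ v
    omega
  have hge : gMinDegree Γ ≤ gMinDegree (Γ.deleteEdges {e}) := by
    refine le_minDeg (fun w => ?_)
    rcases eq_or_ne w v with rfl | hwv
    · rw [he, gDegree_deleteEdges_mem hadj]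
      omega
    rcases eq_or_ne w v⁻¹ with rfl | hwvi
    · have hswap : e = s(v⁻¹, v) := by rw [he, Sym2.eq_swap]
      rw [hswap, gDegree_deleteEdges_mem hadj.symm]
      omega
    · rw [gDegree_deleteEdges_not_mem (by
        rw [he, Sym2.mem_iff]
        push_neg
        exact ⟨hwv, hwvi⟩)]
      exact minDeg_le Γ w
  rw [h2, h1] at hmin
  omega

lemma maxgen_orderOf_eq (hME : MinimallyEdgeConnected (powerGraph G))
    {x : G} (hx3 : 3 ≤ orderOf x) {y : G} (hy : IsMaxCyclicGen y) :
    orderOf y = gMinDegree (powerGraph G) + 1 := by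
  have hNT : Nontrivial G := hME.1
  have hdx : gDegree (powerGraph G) x = gMinDegree (powerGraph G) := deg_eq_min hME hx3
  have hx1 : x ≠ 1 := by
    intro h; rw [h, orderOf_one] at hx3; omega
  have hdx2 : 2 ≤ gDegree (powerGraph G) x := by
    have hsub : ({1, x⁻¹} : Set G) ⊆ (powerGraph G).neighborSet x := by
      rintro z (rfl | hz)
      · exact (pg_adj_one hx1).symm
      · rw [Set.mem_singleton_iff] at hz
        subst hz
        exact pg_adj.2 ⟨fun h => (by
          have h2 : x ^ 2 = 1 := by
            rw [pow_two]; nth_rewrite 2 [h]; exact mul_inv_cancel x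
          have := Nat.le_of_dvd (by norm_num) (orderOf_dvd_of_pow_eq_one h2)
          omega), Or.inr (inv_mem (mem_zpowers x))⟩
    have hcard : ({1, x⁻¹} : Set G).ncard = 2 := Set.ncard_pair (by
      intro h
      have : x = 1 := by rw [← inv_inv x, ← h, inv_one]
      exact hx1 this)
    calc 2 = ({1, x⁻¹} : Set G).ncard := hcard.symm
      _ ≤ ((powerGraph G).neighborSet x).ncard := Set.ncard_le_ncard hsub (Set.toFinite _)
      _ = gDegree (powerGraph G) x := rfl
  rcases Nat.lt_or_ge (orderOf y) 3 with hylt | hyge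
  · interval_cases hoy : orderOf y
    · exact absurd hoy (orderOf_pos y).ne'
    · -- orderOf y = 1 : y = 1, zpowers y = ⊥ ≤ zpowers x, so zpowers x = ⊥, x = 1
      exfalso
      have hy1 : y = 1 := orderOf_eq_one_iff.1 hoy
      have heq := hy x (by rw [hy1, zpowers_one_eq_bot]; exact bot_le)
      have hx' : x ∈ zpowers y := by rw [heq]; exact mem_zpowers x
      rw [hy1, zpowers_one_eq_bot, Subgroup.mem_bot] at hx'
      exact hx1 hx'
    · -- orderOf y = 2: deg y = 1, min ≤ 1 but deg x = min ≥ 2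
      exfalso
      have hdy : gDegree (powerGraph G) y = 1 := by rw [maxgen_gDegree hy, hoy]
      have := minDeg_le (powerGraph G) y
      omega
  · have hdy : gDegree (powerGraph G) y = gMinDegree (powerGraph G) := deg_eq_min hME hyge
    have := maxgen_gDegree hy
    omega

lemma zpowers_isCyclic (g : G) : IsCyclic ↥(zpowers g) := by
  refine ⟨⟨⟨g, mem_zpowers g⟩, ?_⟩⟩
  rintro ⟨x, k, rfl⟩
  exact ⟨k, by ext; simp [SubgroupClass.coe_zpow]⟩

lemma subgroup_of_zpowers_cyclic {g : G} {C : Subgroup G} (hC : C ≤ zpowers g) :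
    ∃ h : G, C = zpowers h := by
  have h1 : IsCyclic ↥(zpowers g) := zpowers_isCyclic g
  have h2 : IsCyclic ↥(C.subgroupOf (zpowers g)) := Subgroup.isCyclic _
  have h3 : IsCyclic ↥C := isCyclic_of_surjective (subgroupOfEquivOfLe hC)
    (subgroupOfEquivOfLe hC).surjective
  obtain ⟨ξ, hξ⟩ := h3.exists_generator
  refine ⟨(ξ : G), le_antisymm ?_ (zpowers_le.2 ξ.2)⟩
  intro z hz
  obtain ⟨k, hk⟩ := hξ ⟨z, hz⟩
  refine ⟨k, ?_⟩
  have hk' := congrArg (Subtype.val) hk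
  simpa [SubgroupClass.coe_zpow] using hk'

-- membership in M \ K forces q ∣ order

lemma q_dvd_of_not_mem_K {g z : G} {q m : ℕ} (hq : q.Prime) (hg : orderOf g = m)
    (hm0 : m ≠ 0) (hz : z ∈ zpowers g)
    (hzK : ¬ z ^ (m / q ^ (m.factorization q)) = 1) : q ∣ orderOf z := by
  by_contra hqz
  apply hzK
  set a := m.factorization q
  set n₁ := m / q ^ a with hn₁
  have hsplit : q ^ a * n₁ = m := Nat.ordProj_mul_ordCompl_eq_self m q
  have hdvd : orderOf z ∣ m := hg ▸ orderOf_dvd_of_mem_zpowers hz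
  have hcop : Nat.Coprime (orderOf z) (q ^ a) :=
    Nat.Coprime.pow_right a (Nat.coprime_comm.1 ((hq.coprime_iff_not_dvd).2 hqz))
  have hdn : orderOf z ∣ n₁ := by
    refine hcop.dvd_of_dvd_mul_left ?_
    rw [hsplit]
    exact hdvd
  exact orderOf_dvd_iff_pow_eq_one.1 hdn

-- lower bound for neighbors within a block

lemma block_lower {g y : G} {q m : ℕ} (hq : q.Prime) (hg : orderOf g = m) (hm3 : 3 ≤ m)
    (hy : y ∈ zpowers g) (hordy : orderOf y = q) (hy1 : y ≠ 1) :
    m - m / q ^ (m.factorization q) ≤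
      ((powerGraph G).neighborSet y ∩ ((zpowers g : Subgroup G) : Set G)).ncard := by
  classical
  set a := m.factorization q with ha
  set n₁ := m / q ^ a with hn₁
  have hm0 : m ≠ 0 := by omega
  have hsplit : q ^ a * n₁ = m := Nat.ordProj_mul_ordCompl_eq_self m q
  have hqn₁ : ¬ q ∣ n₁ := Nat.not_dvd_ordCompl hq hm0
  have hn₁0 : n₁ ≠ 0 := by
    intro h; rw [h, Nat.mul_zero] at hsplit; exact hm0 hsplit.symm
  set M : Set G := ((zpowers g : Subgroup G) : Set G) with hM
  set K : Set G := ((zpowers (g ^ (orderOf g / n₁)) : Subgroup G) : Set G) with hK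
  have hn₁dvd : n₁ ∣ orderOf g := by rw [hg]; exact Nat.ordCompl_dvd m q
  have hKroots : {z : G | z ∈ zpowers g ∧ z ^ n₁ = 1} = K :=
    roots_eq g hn₁dvd (Nat.pos_of_ne_zero hn₁0)
  have hKsub : K ⊆ M := by
    rw [hK, hM]
    have hle : zpowers (g ^ (orderOf g / n₁)) ≤ zpowers g :=
      zpowers_le.2 (pow_mem (mem_zpowers g) _)
    exact fun z hz => hle hz
  have hKcard : K.ncard = n₁ := by
    rw [hK, zpowers_coe_ncard, orderOf_pow_div g hn₁dvd (Nat.pos_of_ne_zero hn₁0)]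
  have hMcard : M.ncard = m := by rw [hM, zpowers_coe_ncard, hg]
  -- y ∈ M \ K
  have hyMK : y ∈ M \ K := by
    refine ⟨hy, fun hyK => ?_⟩
    have : y ^ n₁ = 1 := by
      have := hKroots ▸ hyK
      exact ((Set.mem_setOf_eq ▸ (hKroots.symm ▸ hyK : y ∈ {z : G | z ∈ zpowers g ∧ z ^ n₁ = 1}))).2
    exact hqn₁ (hordy ▸ orderOf_dvd_of_pow_eq_one this)
  -- neighbors
  have hsub : ((M \ K) \ {y}) ∪ {1} ⊆ (powerGraph G).neighborSet y ∩ M := by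
    rintro z (⟨⟨hzM, hzK⟩, hzy⟩ | rfl)
    · have hzy' : z ≠ y := hzy
      have hqz : q ∣ orderOf z := by
        refine q_dvd_of_not_mem_K hq hg hm0 hzM ?_
        intro hpow
        exact hzK (hKroots ▸ (⟨hzM, hpow⟩ : z ∈ {w : G | w ∈ zpowers g ∧ w ^ n₁ = 1}))
      have hyz : y ∈ zpowers z := mem_zpowers_of_orderOf_dvd hy hzM (hordy ▸ hqz)
      exact ⟨pg_adj.2 ⟨fun h => hzy' h.symm, Or.inl hyz⟩, hzM⟩
    · exact ⟨(pg_adj_one hy1).symm, SetLike.mem_coe.2 (one_mem _)⟩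
  have hdisj : Disjoint ((M \ K) \ {y}) ({1} : Set G) := by
    rw [Set.disjoint_singleton_right]
    rintro ⟨⟨_, hK1⟩, _⟩
    exact hK1 (SetLike.mem_coe.2 (one_mem _))
  have hcard2 : (((M \ K) \ {y}) ∪ {1}).ncard = (m - n₁ - 1) + 1 := by
    rw [Set.ncard_union_eq hdisj (Set.toFinite _) (Set.toFinite _), Set.ncard_singleton,
      Set.ncard_diff_singleton_of_mem hyMK, Set.ncard_diff hKsub, hKcard, hMcard]
  have hlt : n₁ < m := by
    have hq3 : 2 ≤ q := hq.two_le
    have ha1 : 1 ≤ a := hq.factorization_pos_of_dvd hm0 (by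
      have : q ∣ orderOf y := by rw [hordy]
      exact hordy ▸ (hg ▸ orderOf_dvd_of_mem_zpowers hy))
    have : 2 ≤ q ^ a := le_trans hq3 (Nat.le_self_pow (by omega) q)
    nlinarith [Nat.pos_of_ne_zero hn₁0]
  calc m - n₁ = (m - n₁ - 1) + 1 := by omega
    _ = (((M \ K) \ {y}) ∪ {1}).ncard := hcard2.symm
    _ ≤ ((powerGraph G).neighborSet y ∩ M).ncard := Set.ncard_le_ncard hsub (Set.toFinite _)

-- upper bound for neighbors within a block

lemma block_upper {h y : G} {q : ℕ} (hq : q.Prime)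
    (hy : y ∈ zpowers h) (hordy : orderOf y = q) (hy1 : y ≠ 1) :
    ((powerGraph G).neighborSet y ∩ ((zpowers h : Subgroup G) : Set G)).ncard ≤
      orderOf h - orderOf h / q ^ ((orderOf h).factorization q) := by
  classical
  set c := orderOf h with hc
  set b := c.factorization q with hb
  set d := c / q ^ b with hd
  have hc0 : c ≠ 0 := (orderOf_pos h).ne'
  have hsplit : q ^ b * d = c := Nat.ordProj_mul_ordCompl_eq_self c q
  have hqd : ¬ q ∣ d := Nat.not_dvd_ordCompl hq hc0
  have hd0 : d ≠ 0 := by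
    intro hd'; rw [hd', Nat.mul_zero] at hsplit; exact hc0 hsplit.symm
  set C : Set G := ((zpowers h : Subgroup G) : Set G) with hC
  set K : Set G := ((zpowers (h ^ (q ^ b)) : Subgroup G) : Set G) with hK
  have hKsub : K ⊆ C := by
    rw [hK, hC]
    have hle : zpowers (h ^ q ^ b) ≤ zpowers h := zpowers_le.2 (pow_mem (mem_zpowers h) _)
    exact fun z hz => hle hz
  have hKcard : K.ncard = d := by
    rw [hK, zpowers_coe_ncard, orderOf_pow, ← hc, Nat.gcd_eq_right (Nat.ordProj_dvd c q), hd]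
  -- orders in K are prime to q
  have hKord : ∀ z ∈ K, ¬ q ∣ orderOf z := by
    intro z hz hqz
    have h1 : orderOf z ∣ d := by
      have := orderOf_dvd_of_mem_zpowers (SetLike.mem_coe.1 hz)
      rwa [orderOf_pow, ← hc, Nat.gcd_eq_right (Nat.ordProj_dvd c q), ← hd] at this
    exact hqd (dvd_trans hqz h1)
  -- elements of K \ {1} are non-neighbors of y
  have hnonadj : ∀ z ∈ K \ {1}, z ∉ (powerGraph G).neighborSet y := by
    rintro z ⟨hzK, hz1⟩ hadj
    obtain ⟨hne, hcase | hcase⟩ := pg_adj.1 (hadj : (powerGraph G).Adj y z)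
    · exact hKord z hzK (hordy ▸ orderOf_dvd_of_mem_zpowers hcase)
    · have : orderOf z ∣ q := hordy ▸ orderOf_dvd_of_mem_zpowers hcase
      rcases (Nat.dvd_prime hq).1 this with h1 | h1
      · exact hz1 (orderOf_eq_one_iff.1 h1)
      · exact hKord z hzK (h1 ▸ dvd_refl q)
  have hyK : y ∉ K := by
    intro hyK
    exact hKord y hyK (by rw [hordy])
  -- disjoint union inside C \ {y}
  have hsub2 : ((powerGraph G).neighborSet y ∩ C) ∪ (K \ {1}) ⊆ C \ {y} := by
    rintro z (⟨hz1, hz2⟩ | ⟨hz1, hz2⟩)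
    · exact ⟨hz2, fun hzy => ((powerGraph G).irrefl (hzy ▸ hz1 : (powerGraph G).Adj y y))⟩
    · exact ⟨hKsub hz1, fun hzy => hyK (hzy ▸ hz1)⟩
  have hdisj : Disjoint ((powerGraph G).neighborSet y ∩ C) (K \ {1}) := by
    rw [Set.disjoint_left]
    rintro z ⟨hz1, _⟩ ⟨hz2, hz3⟩
    exact hnonadj z ⟨hz2, hz3⟩ hz1
  have h1K : (1 : G) ∈ K := SetLike.mem_coe.2 (one_mem _)
  have hcount : ((powerGraph G).neighborSet y ∩ C).ncard + (d - 1) ≤ c - 1 := by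
    have := Set.ncard_le_ncard hsub2 (Set.toFinite _)
    rw [Set.ncard_union_eq hdisj (Set.toFinite _) (Set.toFinite _)] at this
    rw [Set.ncard_diff_singleton_of_mem h1K, hKcard] at this
    rw [Set.ncard_diff_singleton_of_mem (SetLike.mem_coe.2 hy), hC, zpowers_coe_ncard, ← hc]
      at this
    exact this
  have hdc : d ≤ c := by
    rw [hd]
    exact Nat.div_le_self c _
  have hc1 : 1 ≤ c := Nat.pos_of_ne_zero hc0
  have hd1 : 1 ≤ d := Nat.pos_of_ne_zero hd0
  omega

lemma odd_arith {q b a n₁ d m c : ℕ} (hq3 : 3 ≤ q) (hm : q ^ a * n₁ = m)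
    (hc : q ^ b * d = c) (hba : b ≤ a) (h2c : 2 * c ≤ m) (hn₁ : 2 ≤ n₁) (hd : 1 ≤ d)
    (ha : 1 ≤ a) : 2 * n₁ + c ≤ m + d := by
  subst hm; subst hc
  have hq0 : 0 < q := by omega
  have hqb0 : 0 < q ^ b := pow_pos hq0 b
  by_cases hbe : b = a
  · subst hbe
    have hn2d : 2 * d ≤ n₁ := by
      have h1 : q ^ b * (2 * d) ≤ q ^ b * n₁ := by
        calc q ^ b * (2 * d) = 2 * (q ^ b * d) := by ring
          _ ≤ q ^ b * n₁ := h2c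
      exact Nat.le_of_mul_le_mul_left h1 hqb0
    have hQ3 : 3 ≤ q ^ b := le_trans hq3 (Nat.le_self_pow (by omega) q)
    obtain ⟨r, hr⟩ : ∃ r, n₁ = 2 * d + r := ⟨n₁ - 2 * d, by omega⟩
    subst hr
    have h1 : 3 * d ≤ q ^ b * d := Nat.mul_le_mul_right d hQ3
    have h2 : 3 * r ≤ q ^ b * r := Nat.mul_le_mul_right r hQ3
    have h3 : q ^ b * (2 * d + r) = 2 * (q ^ b * d) + q ^ b * r := by ring
    linarith
  · have he : q ^ b * q ^ (a - b) = q ^ a := by rw [← pow_add]; congr 1; omega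
    have he3 : 3 ≤ q ^ (a - b) := le_trans hq3 (Nat.le_self_pow (by omega) q)
    have hqa3 : 3 ≤ q ^ a := le_trans hq3 (Nat.le_self_pow (by omega) q)
    by_cases hQb1 : q ^ b = 1
    · rw [hQb1, one_mul]
      have h1 : 3 * n₁ ≤ q ^ a * n₁ := Nat.mul_le_mul_right n₁ hqa3
      linarith
    · have hQb3 : 3 ≤ q ^ b := by
        have h2 : q ≤ q ^ b := by
          rcases Nat.eq_zero_or_pos b with rfl | hb
          · simp at hQb1
          · exact Nat.le_self_pow (by omega) q
        omega
      have hQ9 : 3 * q ^ b ≤ q ^ a := by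
        calc 3 * q ^ b ≤ q ^ (a - b) * q ^ b := Nat.mul_le_mul_right _ he3
          _ = q ^ a := by rw [mul_comm]; exact he
      have hQ4 : 4 ≤ q ^ a := by
        calc 4 ≤ 3 * q ^ b := by linarith
          _ ≤ q ^ a := hQ9
      have key : q ^ b * d ≤ (q ^ a - 2) * n₁ := by
        have h1 : 2 * (q ^ b * d) ≤ q ^ a * n₁ := h2c
        have h2 : q ^ a ≤ 2 * (q ^ a - 2) := by omega
        have h3 : q ^ a * n₁ ≤ (2 * (q ^ a - 2)) * n₁ := Nat.mul_le_mul_right n₁ h2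
        have h4 : (2 * (q ^ a - 2)) * n₁ = 2 * ((q ^ a - 2) * n₁) := by ring
        linarith
      have hsub : (q ^ a - 2) * n₁ + 2 * n₁ = q ^ a * n₁ := by
        have h5 : q ^ a - 2 + 2 = q ^ a := by omega
        calc (q ^ a - 2) * n₁ + 2 * n₁ = (q ^ a - 2 + 2) * n₁ := by rw [Nat.add_mul]
          _ = q ^ a * n₁ := by rw [h5]
      linarith


lemma no_odd_composite (hME : MinimallyEdgeConnected (powerGraph G)) {m q : ℕ}
    (hmin : gMinDegree (powerGraph G) + 1 = m)
    (hall : ∀ z : G, IsMaxCyclicGen z → orderOf z = m)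
    (hq : q.Prime) (hq3 : 3 ≤ q) (hqm : q ∣ m) (hm3 : 3 ≤ m)
    (hnp : m ≠ q ^ (m.factorization q)) : False := by
  classical
  have hNT : Nontrivial G := hME.1
  have hm0 : m ≠ 0 := by omega
  set a := m.factorization q with ha
  set n₁ := m / q ^ a with hn₁d
  have hsplit : q ^ a * n₁ = m := Nat.ordProj_mul_ordCompl_eq_self m q
  have hqn₁ : ¬ q ∣ n₁ := Nat.not_dvd_ordCompl hq hm0
  have ha1 : 1 ≤ a := hq.factorization_pos_of_dvd hm0 hqm
  have hn₁1 : 1 ≤ n₁ := by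
    rcases Nat.eq_zero_or_pos n₁ with h | h
    · rw [h, Nat.mul_zero] at hsplit; omega
    · exact h
  have hn₁2 : 2 ≤ n₁ := by
    rcases Nat.lt_or_ge n₁ 2 with h | h
    · have : n₁ = 1 := by omega
      rw [this, Nat.mul_one] at hsplit
      exact absurd hsplit.symm hnp
    · exact h
  obtain ⟨g, -, hgmax⟩ := exists_maxgen (1 : G)
  have hg : orderOf g = m := hall g hgmax
  have hqog : q ∣ orderOf g := by rw [hg]; exact hqm
  set y := g ^ (orderOf g / q) with hy
  have hyq : orderOf y = q := orderOf_pow_div g hqog hq.pos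
  have hy3 : 3 ≤ orderOf y := by omega
  have hy1 : y ≠ 1 := by
    intro h; rw [h, orderOf_one] at hyq; omega
  have hyM : y ∈ zpowers g := hy ▸ pow_mem (mem_zpowers g) _
  have hdy : gDegree (powerGraph G) y = m - 1 := by
    rw [deg_eq_min hME hy3]; omega
  set A := (powerGraph G).neighborSet y ∩ ((zpowers g : Subgroup G) : Set G) with hA
  have hAlow : m - n₁ ≤ A.ncard := block_lower hq hg hm3 hyM hyq hy1
  have hAup : A.ncard ≤ m - n₁ := by
    have h1 := block_upper (h := g) hq hyM hyq hy1
    rw [hg] at h1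
    exact h1
  have hz : ∃ z ∈ (powerGraph G).neighborSet y, z ∉ ((zpowers g : Subgroup G) : Set G) := by
    by_contra hco
    push_neg at hco
    have hNA : (powerGraph G).neighborSet y = A := (Set.inter_eq_left.2 hco).symm
    have hd2 : ((powerGraph G).neighborSet y).ncard = m - 1 := hdy
    rw [hNA] at hd2
    omega
  obtain ⟨z, hzN, hzM⟩ := hz
  obtain ⟨g', hzg', hg'max⟩ := exists_maxgen z
  have hg' : orderOf g' = m := hall g' hg'max
  have hyM' : y ∈ zpowers g' := by
    obtain ⟨hne, hcase | hcase⟩ := pg_adj.1 (hzN : (powerGraph G).Adj y z)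
    · exact zpowers_le.2 hzg' hcase
    · exact absurd (SetLike.mem_coe.2 (zpowers_le.2 hyM hcase)) hzM
  have hMM' : zpowers g ≠ zpowers g' := by
    intro h
    rw [← h] at hzg'
    exact hzM (SetLike.mem_coe.2 hzg')
  set C : Subgroup G := zpowers g ⊓ zpowers g' with hCdef
  obtain ⟨h, hCh⟩ := subgroup_of_zpowers_cyclic (inf_le_left : C ≤ zpowers g)
  set c := orderOf h with hc
  have hcC : Nat.card C = c := by rw [hCdef, hCh, Nat.card_zpowers]
  have hyC : y ∈ C := Subgroup.mem_inf.2 ⟨hyM, hyM'⟩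
  have hyh : y ∈ zpowers h := by rw [← hCh]; exact hyC
  have hqc : q ∣ c := by
    have h1 := Subgroup.orderOf_dvd_natCard C hyC
    rwa [hcC, hyq] at h1
  have hcm : c ∣ m := by
    have h1 := card_dvd_of_le (inf_le_left : C ≤ zpowers g)
    rwa [hcC, Nat.card_zpowers, hg] at h1
  have hc1 : 1 ≤ c := orderOf_pos h
  have hcne : c ≠ m := by
    intro hceq
    have hsetle : ((C : Subgroup G) : Set G) ⊆ ((zpowers g : Subgroup G) : Set G) :=
      SetLike.coe_subset_coe.2 inf_le_left
    have hCset : ((C : Subgroup G) : Set G).ncard = c := by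
      rw [← Nat.card_coe_set_eq, SetLike.coe_sort_coe, hcC]
    have hseteq : ((C : Subgroup G) : Set G) = ((zpowers g : Subgroup G) : Set G) :=
      Set.eq_of_subset_of_ncard_le hsetle
        (by rw [zpowers_coe_ncard, hg, ← hceq, hCset]) (Set.toFinite _)
    have hgC : g ∈ C := by
      have : g ∈ ((C : Subgroup G) : Set G) := hseteq ▸ (SetLike.mem_coe.2 (mem_zpowers g))
      exact SetLike.mem_coe.1 this
    have hle : zpowers g ≤ zpowers g' := zpowers_le.2 (Subgroup.mem_inf.1 hgC).2
    exact hMM' (hgmax g' hle)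
  have h2c : 2 * c ≤ m := by
    obtain ⟨k, hk⟩ := hcm
    have hk2 : 2 ≤ k := by
      rcases Nat.lt_or_ge k 2 with hlt | hge
      · exfalso
        interval_cases k
        · rw [Nat.mul_zero] at hk; omega
        · rw [Nat.mul_one] at hk; exact hcne hk.symm
      · exact hge
    calc 2 * c ≤ k * c := Nat.mul_le_mul_right c hk2
      _ = m := by rw [hk, Nat.mul_comm]
  set b := c.factorization q with hb
  set d := c / q ^ b with hdd
  have hsplitc : q ^ b * d = c := Nat.ordProj_mul_ordCompl_eq_self c q
  have hba : b ≤ a := by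
    have hcpos : c ≠ 0 := by omega
    have h1 := (Nat.factorization_le_iff_dvd hcpos hm0).2 hcm
    exact h1 q
  have hd1 : 1 ≤ d := by
    rcases Nat.eq_zero_or_pos d with h0 | h0
    · rw [h0, Nat.mul_zero] at hsplitc; omega
    · exact h0
  set B := (powerGraph G).neighborSet y ∩ ((zpowers g' : Subgroup G) : Set G) with hB
  have hBlow : m - n₁ ≤ B.ncard := block_lower hq hg' hm3 hyM' hyq hy1
  have hABsub : A ∩ B ⊆ (powerGraph G).neighborSet y ∩ ((zpowers h : Subgroup G) : Set G) := by
    rintro w ⟨⟨hw1, hw2⟩, ⟨-, hw3⟩⟩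
    refine ⟨hw1, ?_⟩
    rw [← hCh]
    exact SetLike.mem_coe.2 (Subgroup.mem_inf.2 ⟨SetLike.mem_coe.1 hw2, SetLike.mem_coe.1 hw3⟩)
  have hABup : (A ∩ B).ncard ≤ c - d := by
    have h1 := block_upper (h := h) hq hyh hyq hy1
    rw [← hc] at h1
    calc (A ∩ B).ncard
        ≤ ((powerGraph G).neighborSet y ∩ ((zpowers h : Subgroup G) : Set G)).ncard :=
          Set.ncard_le_ncard hABsub (Set.toFinite _)
      _ ≤ c - d := h1
  have hunion : (A ∪ B).ncard ≤ m - 1 := by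
    rw [← hdy, gDegree]
    exact Set.ncard_le_ncard (by rintro w (hw | hw); exacts [hw.1, hw.1]) (Set.toFinite _)
  have hie := Set.ncard_union_add_ncard_inter A B (Set.toFinite _) (Set.toFinite _)
  have harith : 2 * n₁ + c ≤ m + d :=
    odd_arith hq3 hsplit hsplitc hba h2c hn₁2 hd1 ha1
  have hn₁m : n₁ ≤ m := by
    calc n₁ ≤ q ^ a * n₁ := Nat.le_mul_of_pos_left _ (pow_pos hq.pos a)
      _ = m := hsplit
  have hdc : d ≤ c := Nat.div_le_self _ _
  omega

lemma block_complete_padic {g u w : G} {p : ℕ} (hp : p.Prime) {k : ℕ}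
    (hpg : orderOf g = p ^ k) (hu : u ∈ zpowers g) (hw : w ∈ zpowers g) (huw : u ≠ w) :
    (powerGraph G).Adj u w := by
  have hud : orderOf u ∣ p ^ k := hpg ▸ orderOf_dvd_of_mem_zpowers hu
  have hwd : orderOf w ∣ p ^ k := hpg ▸ orderOf_dvd_of_mem_zpowers hw
  obtain ⟨i, hi, hiu⟩ := (Nat.dvd_prime_pow hp).1 hud
  obtain ⟨j, hj, hjw⟩ := (Nat.dvd_prime_pow hp).1 hwd
  rcases le_total i j with hij | hij
  · exact pg_adj.2 ⟨huw, Or.inl (mem_zpowers_of_orderOf_dvd hu hw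
      (by rw [hiu, hjw]; exact pow_dvd_pow p hij))⟩
  · exact pg_adj.2 ⟨huw, Or.inr (mem_zpowers_of_orderOf_dvd hw hu
      (by rw [hiu, hjw]; exact pow_dvd_pow p hij))⟩

-- 6b: neighbor set of high-order elements in prime-power setting

lemma pp_neighborSet (hME : MinimallyEdgeConnected (powerGraph G)) {m : ℕ}
    (hmin : gMinDegree (powerGraph G) + 1 = m) {p k : ℕ} (hp : p.Prime) (hm : m = p ^ k)
    {v g : G} (hvord : 3 ≤ orderOf v) (hv : v ∈ zpowers g) (hgmax : IsMaxCyclicGen g)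
    (hgord : orderOf g = m) :
    (powerGraph G).neighborSet v = ((zpowers g : Subgroup G) : Set G) \ {v} := by
  have hsub : ((zpowers g : Subgroup G) : Set G) \ {v} ⊆ (powerGraph G).neighborSet v := by
    rintro w ⟨hwM, hwv⟩
    exact (block_complete_padic hp (hm ▸ hgord) hwM hv
      (fun h => hwv (Set.mem_singleton_iff.2 h))).symm
  have hcard : ((powerGraph G).neighborSet v).ncard ≤
      (((zpowers g : Subgroup G) : Set G) \ {v}).ncard := by
    rw [Set.ncard_diff_singleton_of_mem (SetLike.mem_coe.2 hv), zpowers_coe_ncard, hgord]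
    have h1 : gDegree (powerGraph G) v = gMinDegree (powerGraph G) := deg_eq_min hME hvord
    rw [gDegree] at h1
    omega
  exact (Set.eq_of_subset_of_ncard_le hsub hcard (Set.toFinite _)).symm

-- 6c: unique block for elements of order ≥ 3

lemma pp_unique_block (hME : MinimallyEdgeConnected (powerGraph G)) {m : ℕ}
    (hmin : gMinDegree (powerGraph G) + 1 = m) {p k : ℕ} (hp : p.Prime) (hm : m = p ^ k)
    (hall : ∀ z : G, IsMaxCyclicGen z → orderOf z = m)
    {v : G} (hvord : 3 ≤ orderOf v) {g g' : G} (hgmax : IsMaxCyclicGen g)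
    (hg'max : IsMaxCyclicGen g') (hv : v ∈ zpowers g) (hv' : v ∈ zpowers g') :
    zpowers g = zpowers g' := by
  have h1 := pp_neighborSet hME hmin hp hm hvord hv hgmax (hall g hgmax)
  have h2 := pp_neighborSet hME hmin hp hm hvord hv' hg'max (hall g' hg'max)
  have hdiff : ((zpowers g : Subgroup G) : Set G) \ {v} =
      ((zpowers g' : Subgroup G) : Set G) \ {v} := by rw [← h1, ← h2]
  have hset : ((zpowers g : Subgroup G) : Set G) = ((zpowers g' : Subgroup G) : Set G) := by
    have e1 : ((zpowers g : Subgroup G) : Set G) =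
        (((zpowers g : Subgroup G) : Set G) \ {v}) ∪ {v} :=
      (Set.diff_union_of_subset (Set.singleton_subset_iff.2 (SetLike.mem_coe.2 hv))).symm
    have e2 : ((zpowers g' : Subgroup G) : Set G) =
        (((zpowers g' : Subgroup G) : Set G) \ {v}) ∪ {v} :=
      (Set.diff_union_of_subset (Set.singleton_subset_iff.2 (SetLike.mem_coe.2 hv'))).symm
    rw [e1, e2, hdiff]
  exact SetLike.ext' hset

-- 6d: elements of an order-2 cyclic subgroup

lemma mem_zpowers_order_two {u w : G} (hu : orderOf u = 2) (hw : w ∈ zpowers u) :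
    w = 1 ∨ w = u := by
  obtain ⟨n, hn, rfl⟩ := exists_pos_pow_of_mem_zpowers hw
  rw [← pow_mod_orderOf, hu]
  rcases Nat.mod_two_eq_zero_or_one n with h | h
  · rw [h, pow_zero]; exact Or.inl rfl
  · rw [h, pow_one]; exact Or.inr rfl

-- involutions in a cyclic 2-group block are unique

lemma invol_eq {g y w : G} (hy : y ∈ zpowers g) (hw : w ∈ zpowers g)
    (hy2 : orderOf y = 2) (hw2 : orderOf w = 2) : w = y := by
  have := mem_zpowers_of_orderOf_dvd hw hy (by rw [hy2, hw2])
  rcases mem_zpowers_order_two hy2 this with h | h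
  · exfalso
    rw [h, orderOf_one] at hw2
    omega
  · exact h

lemma invol_unique_block (hME : MinimallyEdgeConnected (powerGraph G)) {m : ℕ}
    (hmin : gMinDegree (powerGraph G) + 1 = m) {k : ℕ} (hm : m = 2 ^ k) (hk : 2 ≤ k)
    (hall : ∀ z : G, IsMaxCyclicGen z → orderOf z = m)
    {y : G} (hy2 : orderOf y = 2) {g g' : G} (hgmax : IsMaxCyclicGen g)
    (hg'max : IsMaxCyclicGen g') (hy : y ∈ zpowers g) (hy' : y ∈ zpowers g') :
    zpowers g = zpowers g' := by
  classical
  by_contra hne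
  have hNT : Nontrivial G := hME.1
  have hp2 : Nat.Prime 2 := Nat.prime_two
  have hy1 : y ≠ 1 := by intro h; rw [h, orderOf_one] at hy2; omega
  have hm4 : 4 ≤ m := by
    rw [hm]
    calc 4 = 2 ^ 2 := by norm_num
      _ ≤ 2 ^ k := Nat.pow_le_pow_right (by norm_num) hk
  set Γ := powerGraph G with hΓ
  have hadj1y : Γ.Adj 1 y := pg_adj_one hy1
  set e : Sym2 G := s(1, y) with he
  have heE : e ∈ Γ.edgeSet := hadj1y
  have hEC := hME.2.2 e heE
  have hconnΓ : edgeConn Γ = gMinDegree Γ := plesnik Γ 1 (fun w hw => pg_adj_one hw)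
  obtain ⟨S, hScard, hSsub, hSdis⟩ := exists_min_cut (Γ.deleteEdges {e})
  have hScard' : S.card = m - 2 := by rw [hScard, hEC, hconnΓ]; omega
  set H := (Γ.deleteEdges {e}).deleteEdges (↑S : Set (Sym2 G)) with hH
  set D : Set G := {v | ¬ H.Reachable 1 v} with hD
  have h1D : (1 : G) ∉ D := fun h => h (SimpleGraph.Reachable.refl 1)
  have hDne : D.Nonempty := by
    by_contra hemp
    rw [Set.not_nonempty_iff_eq_empty] at hemp
    refine hSdis (connected_of_forall_reachable 1 (fun v => ?_))
    by_contra hr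
    have hvD : v ∈ D := hr
    rw [hemp] at hvD
    exact hvD
  have hcross : ∀ a ∈ D, ∀ b, b ∉ D → (Γ.deleteEdges {e}).Adj a b → s(a, b) ∈ S := by
    intro a ha b hb hadj
    by_contra hns
    have hAdjH : H.Adj b a := SimpleGraph.deleteEdges_adj.2 ⟨hadj.symm, by rwa [Sym2.eq_swap]⟩
    have hrb : H.Reachable 1 b := not_not.1 hb
    exact ha (hrb.trans hAdjH.reachable)
  have hreach : ∀ v : G, ∀ g₀ : G, IsMaxCyclicGen g₀ → v ∈ zpowers g₀ → y ∉ zpowers g₀ →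
      H.Reachable 1 v := by
    intro v g₀ hg₀ hvg₀ hyg₀
    have hblk : ∀ a ∈ ((zpowers g₀ : Subgroup G) : Set G),
        ∀ b ∈ ((zpowers g₀ : Subgroup G) : Set G), a ≠ b → (Γ.deleteEdges {e}).Adj a b := by
      intro a ha b hb hab
      refine SimpleGraph.deleteEdges_adj.2
        ⟨block_complete_padic hp2 (hm ▸ hall g₀ hg₀) (SetLike.mem_coe.1 ha)
          (SetLike.mem_coe.1 hb) hab, ?_⟩
      simp only [Set.mem_singleton_iff, he]
      intro hc
      rcases Sym2.eq_iff.1 hc with ⟨h1, h2⟩ | ⟨h1, h2⟩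
      · exact hyg₀ (h2 ▸ (SetLike.mem_coe.1 hb))
      · exact hyg₀ (h1 ▸ (SetLike.mem_coe.1 ha))
    exact reach_in_block hblk S
      (by rw [zpowers_coe_ncard, hall g₀ hg₀]; omega)
      1 (SetLike.mem_coe.2 (one_mem _)) v (SetLike.mem_coe.2 hvg₀)
  have hDblocks : ∀ v ∈ D, ∀ g₀ : G, IsMaxCyclicGen g₀ → v ∈ zpowers g₀ → y ∈ zpowers g₀ := by
    intro v hv g₀ h1 h2
    by_contra h3
    exact hv (hreach v g₀ h1 h2 h3)
  have hTcard : ∀ g₀ : G, IsMaxCyclicGen g₀ → y ∈ zpowers g₀ →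
      (((zpowers g₀ : Subgroup G) : Set G) \ {1, y}).ncard = m - 2 := by
    intro g₀ h1 h2
    rw [Set.ncard_diff (by
      rintro z hz
      rcases hz with rfl | hz
      · exact SetLike.mem_coe.2 (one_mem _)
      · rw [Set.mem_singleton_iff] at hz
        subst hz
        exact SetLike.mem_coe.2 h2), Set.ncard_pair (Ne.symm hy1), zpowers_coe_ncard,
      hall g₀ h1]
  -- adjacency helpers
  have hadj_del : ∀ a b : G, Γ.Adj a b → a ≠ 1 → a ≠ y → (Γ.deleteEdges {e}).Adj a b := by
    intro a b hab ha1 hay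
    refine SimpleGraph.deleteEdges_adj.2 ⟨hab, ?_⟩
    simp only [Set.mem_singleton_iff, he]
    intro hc
    rcases Sym2.eq_iff.1 hc with ⟨h1, h2⟩ | ⟨h1, h2⟩
    · exact ha1 h1
    · exact hay h1
  have hadj_dely : ∀ b : G, Γ.Adj y b → b ≠ 1 → (Γ.deleteEdges {e}).Adj y b := by
    intro b hab hb1
    refine SimpleGraph.deleteEdges_adj.2 ⟨hab, ?_⟩
    simp only [Set.mem_singleton_iff, he]
    intro hc
    rcases Sym2.eq_iff.1 hc with ⟨h1, h2⟩ | ⟨h1, h2⟩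
    · exact hy1 h1
    · exact hb1 h2
  by_cases hyD : y ∈ D
  · -- two blocks through y
    set T₁ : Set G := ((zpowers g : Subgroup G) : Set G) \ {1, y} with hT₁
    set T₂ : Set G := ((zpowers g' : Subgroup G) : Set G) \ {1, y} with hT₂
    have hdisjT : Disjoint T₁ T₂ := by
      rw [Set.disjoint_left]
      rintro w ⟨hw1, hw2⟩ ⟨hw3, _⟩
      simp only [Set.mem_insert_iff, Set.mem_singleton_iff, not_or] at hw2
      have hw1' : w ≠ 1 := hw2.1
      have hwy : w ≠ y := hw2.2
      rcases Nat.lt_or_ge (orderOf w) 3 with hlt | hge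
      · interval_cases howw : orderOf w
        · exact absurd howw (orderOf_pos w).ne'
        · exact hw1' (orderOf_eq_one_iff.1 howw)
        · exact hwy (invol_eq hy (SetLike.mem_coe.1 hw1) hy2 howw)
      · exact hne (pp_unique_block hME hmin hp2 hm hall hge hgmax hg'max
          (SetLike.mem_coe.1 hw1) (SetLike.mem_coe.1 hw3))
    set f : G → Sym2 G := fun t => if t ∈ D then s(t, 1) else s(t, y) with hf
    have hT_mem : ∀ t ∈ T₁ ∪ T₂, t ≠ 1 ∧ t ≠ y ∧ Γ.Adj t y := by
      rintro t (⟨ht1, ht2⟩ | ⟨ht1, ht2⟩) <;>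
        simp only [Set.mem_insert_iff, Set.mem_singleton_iff, not_or] at ht2
      · exact ⟨ht2.1, ht2.2, block_complete_padic hp2 (hm ▸ hall g hgmax)
          (SetLike.mem_coe.1 ht1) hy ht2.2⟩
      · exact ⟨ht2.1, ht2.2, block_complete_padic hp2 (hm ▸ hall g' hg'max)
          (SetLike.mem_coe.1 ht1) hy' ht2.2⟩
    have hmapsto : ∀ t ∈ T₁ ∪ T₂, f t ∈ (↑S : Set (Sym2 G)) := by
      intro t ht
      obtain ⟨ht1, hty, htadjy⟩ := hT_mem t ht
      by_cases htD : t ∈ D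
      · simp only [hf, if_pos htD]
        exact hcross t htD 1 h1D (hadj_del t 1 (pg_adj_one ht1).symm ht1 hty)
      · simp only [hf, if_neg htD]
        have hmem := hcross y hyD t htD (hadj_dely t htadjy.symm ht1)
        rwa [Sym2.eq_swap] at hmem
    have hinj : Set.InjOn f (T₁ ∪ T₂) := by
      intro t ht t' ht' htt
      obtain ⟨ht1, hty, -⟩ := hT_mem t ht
      obtain ⟨ht'1, ht'y, -⟩ := hT_mem t' ht'
      simp only [hf] at htt
      split_ifs at htt with h1 h2 h2
      · rcases Sym2.eq_iff.1 htt with ⟨h, _⟩ | ⟨h, h'⟩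
        · exact h
        · exact absurd h'.symm ht'1
      · rcases Sym2.eq_iff.1 htt with ⟨_, h⟩ | ⟨h, h'⟩
        · exact absurd h.symm hy1
        · exact absurd h hty
      · rcases Sym2.eq_iff.1 htt with ⟨_, h⟩ | ⟨h, h'⟩
        · exact absurd h hy1
        · exact absurd h ht1
      · rcases Sym2.eq_iff.1 htt with ⟨h, _⟩ | ⟨h, h'⟩
        · exact h
        · exact h.trans h'
    have hcount : (T₁ ∪ T₂).ncard ≤ S.card := by
      rw [← Set.ncard_coe_finset S, ← Set.ncard_image_of_injOn hinj]
      exact Set.ncard_le_ncard (fun x hx => by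
        obtain ⟨t, ht, rfl⟩ := hx
        exact hmapsto t ht) (Set.toFinite _)
    have hTT : (T₁ ∪ T₂).ncard = 2 * (m - 2) := by
      rw [Set.ncard_union_eq hdisjT (Set.toFinite _) (Set.toFinite _),
        hTcard g hgmax hy, hTcard g' hg'max hy']
      omega
    omega
  · -- y not in D : one block through some element of D
    obtain ⟨v, hvD⟩ := hDne
    have hv1 : v ≠ 1 := fun h => h1D (h ▸ hvD)
    have hvy : v ≠ y := fun h => hyD (h ▸ hvD)
    obtain ⟨g₀, hvg₀, hg₀max⟩ := exists_maxgen v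
    have hyg₀ : y ∈ zpowers g₀ := hDblocks v hvD g₀ hg₀max hvg₀
    set T : Set G := ((zpowers g₀ : Subgroup G) : Set G) \ {1, y} with hT
    have hvT : v ∈ T := by
      refine ⟨SetLike.mem_coe.2 hvg₀, ?_⟩
      simp only [Set.mem_insert_iff, Set.mem_singleton_iff, not_or]
      exact ⟨hv1, hvy⟩
    have hT_mem : ∀ t ∈ T, t ≠ 1 ∧ t ≠ y ∧ t ∈ zpowers g₀ := by
      rintro t ⟨ht1, ht2⟩
      simp only [Set.mem_insert_iff, Set.mem_singleton_iff, not_or] at ht2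
      exact ⟨ht2.1, ht2.2, SetLike.mem_coe.1 ht1⟩
    set f : G → Sym2 G := fun t => if t ∈ D then s(t, 1) else s(t, v) with hf
    have hmapsto : ∀ t ∈ T, f t ∈ (↑S : Set (Sym2 G)) := by
      intro t ht
      obtain ⟨ht1, hty, htg₀⟩ := hT_mem t ht
      by_cases htD : t ∈ D
      · simp only [hf, if_pos htD]
        exact hcross t htD 1 h1D (hadj_del t 1 (pg_adj_one ht1).symm ht1 hty)
      · simp only [hf, if_neg htD]
        have htv : t ≠ v := fun h => htD (h ▸ hvD)
        have hadjtv : Γ.Adj v t := block_complete_padic hp2 (hm ▸ hall g₀ hg₀max) hvg₀ htg₀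
          (fun h => htv h.symm)
        have hmem := hcross v hvD t htD (hadj_del v t hadjtv hv1 hvy)
        rwa [Sym2.eq_swap] at hmem
    have hinj : Set.InjOn f T := by
      intro t ht t' ht' htt
      obtain ⟨ht1, hty, -⟩ := hT_mem t ht
      obtain ⟨ht'1, ht'y, -⟩ := hT_mem t' ht'
      simp only [hf] at htt
      split_ifs at htt with h1 h2 h2
      · rcases Sym2.eq_iff.1 htt with ⟨h, _⟩ | ⟨h, h'⟩
        · exact h
        · exact absurd h'.symm ht'1
      · rcases Sym2.eq_iff.1 htt with ⟨_, h⟩ | ⟨h, h'⟩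
        · exact absurd h.symm hv1
        · exact absurd h'.symm ht'1
      · rcases Sym2.eq_iff.1 htt with ⟨_, h⟩ | ⟨h, h'⟩
        · exact absurd h hv1
        · exact absurd h ht1
      · rcases Sym2.eq_iff.1 htt with ⟨h, _⟩ | ⟨h, h'⟩
        · exact h
        · exact h.trans h'
    have hadjvy : Γ.Adj v y := block_complete_padic hp2 (hm ▸ hall g₀ hg₀max) hvg₀ hyg₀ hvy
    have hestar : s(v, y) ∈ S := hcross v hvD y hyD (hadj_del v y hadjvy hv1 hvy)
    have hnotmem : s(v, y) ∉ f '' T := by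
      rintro ⟨t, ht, htt⟩
      obtain ⟨ht1, hty, -⟩ := hT_mem t ht
      simp only [hf] at htt
      split_ifs at htt with h1
      · rcases Sym2.eq_iff.1 htt with ⟨_, h⟩ | ⟨h, h'⟩
        · exact hy1 h.symm
        · exact hv1 h'.symm
      · rcases Sym2.eq_iff.1 htt with ⟨h, h'⟩ | ⟨h, h'⟩
        · exact hvy (h ▸ h')
        · exact hty h
    have hsubS : insert (s(v, y)) (f '' T) ⊆ (↑S : Set (Sym2 G)) := by
      rintro x (rfl | hx)
      · exact hestar
      · obtain ⟨t, ht, rfl⟩ := hx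
        exact hmapsto t ht
    have hcount : (insert (s(v, y)) (f '' T)).ncard ≤ S.card := by
      rw [← Set.ncard_coe_finset S]
      exact Set.ncard_le_ncard hsubS (Set.toFinite _)
    have hcount2 : (insert (s(v, y)) (f '' T)).ncard = (m - 2) + 1 := by
      rw [Set.ncard_insert_of_notMem hnotmem (Set.toFinite _),
        Set.ncard_image_of_injOn hinj, hTcard g₀ hg₀max hyg₀]
    omega

lemma pg_eq_top_of_single_pblock {g : G} {p k : ℕ} (hp : p.Prime) (hord : orderOf g = p ^ k)
    (hpg : ∀ x : G, x ∈ zpowers g) : powerGraph G = ⊤ := by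
  ext a b
  simp only [SimpleGraph.top_adj]
  constructor
  · exact fun h => (pg_adj.1 h).1
  · intro hne
    exact block_complete_padic hp hord (hpg a) (hpg b) hne

lemma pp_contradiction (hME : MinimallyEdgeConnected (powerGraph G))
    (hNC : powerGraph G ≠ ⊤) {m : ℕ}
    (hmin : gMinDegree (powerGraph G) + 1 = m)
    (hall : ∀ z : G, IsMaxCyclicGen z → orderOf z = m)
    {p k : ℕ} (hp : p.Prime) (hk : 2 ≤ k) (hm : m = p ^ k) : False := by
  classical
  have hNT : Nontrivial G := hME.1
  have hFact : Fact p.Prime := ⟨hp⟩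
  have horddvd : ∀ x : G, orderOf x ∣ m := by
    intro x
    obtain ⟨z, hxz, hzmax⟩ := exists_maxgen x
    exact (hall z hzmax) ▸ orderOf_dvd_of_mem_zpowers hxz
  have hPG : IsPGroup p G := by
    intro x
    exact ⟨k, orderOf_dvd_iff_pow_eq_one.1 (hm ▸ horddvd x)⟩
  have hUB : ∀ v : G, v ≠ 1 → ∀ g g' : G, IsMaxCyclicGen g → IsMaxCyclicGen g' →
      v ∈ zpowers g → v ∈ zpowers g' → zpowers g = zpowers g' := by
    intro v hv1 g g' hg hg' hvg hvg'
    rcases Nat.lt_or_ge (orderOf v) 3 with hlt | hge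
    · have hv2 : orderOf v = 2 := by
        have h1 : orderOf v ≠ 1 := fun h => hv1 (orderOf_eq_one_iff.1 h)
        have h2 := orderOf_pos v
        omega
      have hp2 : p = 2 := by
        have h2 : (2 : ℕ) ∣ p ^ k := hv2 ▸ (hm ▸ horddvd v)
        have h3 := (Nat.prime_dvd_prime_iff_eq Nat.prime_two hp).1
          (Nat.Prime.dvd_of_dvd_pow Nat.prime_two h2)
        omega
      exact invol_unique_block hME hmin (by rw [hm, hp2]) hk hall hv2 hg hg' hvg hvg'
    · exact pp_unique_block hME hmin hp hm hall hge hg hg' hvg hvg'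
  have hcent : ∃ z : G, z ∈ Subgroup.center G ∧ orderOf z = p := by
    have hnt : Nontrivial (Subgroup.center G) := hPG.center_nontrivial
    obtain ⟨z₀', hz₀ne⟩ := exists_ne (1 : Subgroup.center G)
    set z₀ : G := (z₀' : G) with hz₀def
    have hz₀c : z₀ ∈ Subgroup.center G := z₀'.2
    have hz₀1 : z₀ ≠ 1 := fun h => hz₀ne (Subtype.ext h)
    have hpord : p ∣ orderOf z₀ := by
      rcases (Nat.dvd_prime_pow hp).1 (hm ▸ horddvd z₀) with ⟨j, hj, hjz⟩
      have hj1 : 1 ≤ j := by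
        by_contra h
        push_neg at h
        have hj0 : j = 0 := by omega
        rw [hj0, pow_zero] at hjz
        exact hz₀1 (orderOf_eq_one_iff.1 hjz)
      rw [hjz]
      exact dvd_pow_self p (by omega)
    exact ⟨z₀ ^ (orderOf z₀ / p), pow_mem hz₀c _, orderOf_pow_div z₀ hpord hp.pos⟩
  obtain ⟨z, hzc, hzp⟩ := hcent
  have hz1 : z ≠ 1 := by
    intro h
    rw [h, orderOf_one] at hzp
    exact hp.one_lt.ne' hzp.symm
  obtain ⟨gz, hzgz, hgzmax⟩ := exists_maxgen z
  have hout : ∃ v : G, v ∉ zpowers gz := by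
    by_contra h
    push_neg at h
    exact hNC (pg_eq_top_of_single_pblock hp (hm ▸ hall gz hgzmax) h)
  obtain ⟨v, hv⟩ := hout
  obtain ⟨g', hvg', hg'max⟩ := exists_maxgen v
  have hzg' : z ∉ zpowers g' := by
    intro hzin
    have heq := hUB z hz1 gz g' hgzmax hg'max hzgz hzin
    exact hv (heq ▸ hvg')
  set w := g' with hwdef
  have hword : orderOf w = p ^ k := hm ▸ hall g' hg'max
  have hcomm : Commute w z := Subgroup.mem_center_iff.1 hzc w
  set u := w * z with hu
  have hupow : ∀ n : ℕ, u ^ n = w ^ n * z ^ n := fun n => hcomm.mul_pow n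
  have hzpow : z ^ p ^ (k - 1) = 1 := by
    apply orderOf_dvd_iff_pow_eq_one.1
    rw [hzp]
    exact dvd_pow_self p (by omega)
  have hu1 : u ^ p ^ (k - 1) = w ^ p ^ (k - 1) := by
    rw [hupow, hzpow, mul_one]
  have hune : u ^ p ^ (k - 1) ≠ 1 := by
    rw [hu1]
    intro h
    have hdvd := orderOf_dvd_iff_pow_eq_one.2 h
    rw [hword] at hdvd
    have hle := Nat.le_of_dvd (pow_pos hp.pos _) hdvd
    have hlt : p ^ (k - 1) < p ^ k := Nat.pow_lt_pow_right hp.one_lt (by omega)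
    omega
  have humax : u ^ p ^ k = 1 := by
    rw [hupow]
    have h1 : w ^ p ^ k = 1 := by rw [← hword]; exact pow_orderOf_eq_one w
    have h2 : z ^ p ^ k = 1 := by
      apply orderOf_dvd_iff_pow_eq_one.1
      rw [hzp]
      exact dvd_pow_self p (by omega)
    rw [h1, h2, one_mul]
  have huord : orderOf u = p ^ k := by
    have hdvd : orderOf u ∣ p ^ k := orderOf_dvd_iff_pow_eq_one.2 humax
    obtain ⟨j, hj, hju⟩ := (Nat.dvd_prime_pow hp).1 hdvd
    have hjk : j = k := by
      by_contra hne'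
      have hjk' : j ≤ k - 1 := by omega
      exact hune (orderOf_dvd_iff_pow_eq_one.1 (by rw [hju]; exact pow_dvd_pow p hjk'))
    rw [hju, hjk]
  obtain ⟨g'', hug'', hg''max⟩ := exists_maxgen u
  have hzu_eq : zpowers u = zpowers g'' := by
    have hle : zpowers u ≤ zpowers g'' := zpowers_le.2 hug''
    have hcard : ((zpowers g'' : Subgroup G) : Set G).ncard ≤
        ((zpowers u : Subgroup G) : Set G).ncard := by
      rw [zpowers_coe_ncard, zpowers_coe_ncard, huord, hall g'' hg''max, hm]
    exact SetLike.ext' (Set.eq_of_subset_of_ncard_le (SetLike.coe_subset_coe.2 hle) hcard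
      (Set.toFinite _))
  have humaxgen : IsMaxCyclicGen u := by
    intro w' hw'
    rw [hzu_eq] at hw' ⊢
    exact hg''max w' hw'
  set y' := w ^ p ^ (k - 1) with hy'def
  have hy'ord : orderOf y' = p := by
    rw [hy'def, orderOf_pow, hword, Nat.gcd_eq_right (pow_dvd_pow p (by omega)),
      Nat.pow_div (by omega) hp.pos, (show k - (k - 1) = 1 by omega), pow_one]
  have hy'1 : y' ≠ 1 := by
    intro h
    rw [h, orderOf_one] at hy'ord
    exact hp.one_lt.ne' hy'ord.symm
  have hy'w : y' ∈ zpowers w := pow_mem (mem_zpowers w) _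
  have hy'u : y' ∈ zpowers u := by
    rw [← hu1]
    exact pow_mem (mem_zpowers u) _
  have hblocks := hUB y' hy'1 g' u hg'max humaxgen hy'w hy'u
  have huin : u ∈ zpowers g' := by
    rw [hblocks]
    exact mem_zpowers u
  have hzin : z ∈ zpowers g' := by
    have hzwu : w⁻¹ * u = z := by rw [hu]; group
    rw [← hzwu]
    exact mul_mem (inv_mem (mem_zpowers w)) huin
  exact hzg' hzin

lemma zpowers_eq_of_mem_of_orderOf_eq {x z : G} (hmem : x ∈ zpowers z)
    (hord : orderOf x = orderOf z) : zpowers x = zpowers z := by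
  have hle : zpowers x ≤ zpowers z := zpowers_le.2 hmem
  have hcard : ((zpowers z : Subgroup G) : Set G).ncard ≤
      ((zpowers x : Subgroup G) : Set G).ncard := by
    rw [zpowers_coe_ncard, zpowers_coe_ncard, hord]
  exact SetLike.ext'
    (Set.eq_of_subset_of_ncard_le (SetLike.coe_subset_coe.2 hle) hcard (Set.toFinite _))

lemma exp_p_neighborSet {p : ℕ} (hp : p.Prime) (hexp : ∀ g : G, g ≠ 1 → orderOf g = p)
    {x : G} (hx : x ≠ 1) :
    (powerGraph G).neighborSet x = ((zpowers x : Subgroup G) : Set G) \ {x} := by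
  ext z
  simp only [SimpleGraph.mem_neighborSet, Set.mem_diff, SetLike.mem_coe, Set.mem_singleton_iff]
  constructor
  · intro hadj
    obtain ⟨hne, h | h⟩ := pg_adj.1 hadj
    · rcases eq_or_ne z 1 with rfl | hz1
      · rw [zpowers_one_eq_bot, Subgroup.mem_bot] at h
        exact absurd h hx
      · have heq := zpowers_eq_of_mem_of_orderOf_eq h (by rw [hexp x hx, hexp z hz1])
        exact ⟨heq ▸ mem_zpowers z, fun hc => hne hc.symm⟩
    · exact ⟨h, fun hc => hne hc.symm⟩
  · rintro ⟨hz, hne⟩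
    exact pg_adj.2 ⟨fun h => hne h.symm, Or.inr hz⟩

lemma exp_p_degree {p : ℕ} (hp : p.Prime) (hexp : ∀ g : G, g ≠ 1 → orderOf g = p)
    {x : G} (hx : x ≠ 1) : gDegree (powerGraph G) x = p - 1 := by
  rw [gDegree, exp_p_neighborSet hp hexp hx,
    Set.ncard_diff_singleton_of_mem (mem_zpowers x), zpowers_coe_ncard, hexp x hx]

lemma pg_deg_one [Nontrivial G] : gDegree (powerGraph G) 1 = Nat.card G - 1 := by
  have hN : (powerGraph G).neighborSet 1 = Set.univ \ {1} := by
    ext z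
    simp only [SimpleGraph.mem_neighborSet, Set.mem_diff, Set.mem_univ, true_and,
      Set.mem_singleton_iff]
    constructor
    · exact fun h => fun hc => (powerGraph G).irrefl (hc ▸ h)
    · exact fun h => pg_adj_one h
  rw [gDegree, hN, Set.ncard_diff_singleton_of_mem (Set.mem_univ 1), Set.ncard_univ]

lemma exp_p_minDegree {p : ℕ} (hp : p.Prime) [Nontrivial G]
    (hexp : ∀ g : G, g ≠ 1 → orderOf g = p) :
    gMinDegree (powerGraph G) = p - 1 := by
  obtain ⟨x₀, hx₀⟩ := exists_ne (1 : G)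
  have hpcard : p ≤ Nat.card G := by
    rw [← hexp x₀ hx₀]
    exact Nat.le_of_dvd Nat.card_pos (orderOf_dvd_natCard x₀)
  refine le_antisymm ?_ ?_
  · exact (exp_p_degree hp hexp hx₀) ▸ minDeg_le (powerGraph G) x₀
  · refine le_minDeg (fun x => ?_)
    rcases eq_or_ne x 1 with rfl | hx
    · rw [pg_deg_one]
      omega
    · rw [exp_p_degree hp hexp hx]

lemma forward_direction {p : ℕ} (hp : p.Prime) (hnc : ¬ IsCyclic G)
    (hexpo : Monoid.exponent G = p) :
    powerGraph G ≠ ⊤ ∧ MinimallyEdgeConnected (powerGraph G) := by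
  classical
  have hNT : Nontrivial G := by
    by_contra h
    rw [not_nontrivial_iff_subsingleton] at h
    have h1 : ∀ g : G, g ^ 1 = 1 := fun g => Subsingleton.elim _ _
    have h2 : Monoid.exponent G ∣ 1 := Monoid.exponent_dvd_of_forall_pow_eq_one h1
    rw [Nat.dvd_one, hexpo] at h2
    exact hp.one_lt.ne' h2
  have hexp : ∀ g : G, g ≠ 1 → orderOf g = p := by
    intro g hg
    have hdvd : orderOf g ∣ p := hexpo ▸ Monoid.order_dvd_exponent g
    rcases (Nat.dvd_prime hp).1 hdvd with h | h
    · exact absurd (orderOf_eq_one_iff.1 h) hg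
    · exact h
  set Γ := powerGraph G with hΓ
  have hκ : edgeConn Γ = p - 1 := by
    rw [plesnik Γ 1 (fun w hw => pg_adj_one hw), exp_p_minDegree hp hexp]
  -- noncomplete
  obtain ⟨x₀, hx₀⟩ := exists_ne (1 : G)
  have hnot : ∃ y : G, y ∉ zpowers x₀ := by
    by_contra h
    push_neg at h
    exact hnc ⟨⟨x₀, h⟩⟩
  obtain ⟨y₀, hy₀⟩ := hnot
  have hy₀1 : y₀ ≠ 1 := fun h => hy₀ (h ▸ one_mem _)
  have hnadj : ¬ Γ.Adj x₀ y₀ := by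
    intro hadj
    obtain ⟨hne, h | h⟩ := pg_adj.1 hadj
    · have heq := zpowers_eq_of_mem_of_orderOf_eq h (by rw [hexp x₀ hx₀, hexp y₀ hy₀1])
      exact hy₀ (heq ▸ mem_zpowers y₀)
    · exact hy₀ h
  have hne' : x₀ ≠ y₀ := fun h => hy₀ (h ▸ mem_zpowers x₀)
  refine ⟨?_, hNT, pg_connected, ?_⟩
  · intro htop
    exact hnadj (by rw [htop]; exact hne')
  · intro e he
    induction e using Sym2.ind with
    | _ u v =>
      have huv : Γ.Adj u v := he
      have key : ∀ a b : G, Γ.Adj a b → b ≠ 1 →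
          edgeConn (Γ.deleteEdges {s(a, b)}) = edgeConn Γ - 1 := by
        intro a b hab hb1
        have hdeg : gDegree (Γ.deleteEdges {s(a, b)}) b = p - 2 := by
          rw [show (s(a, b) : Sym2 G) = s(b, a) from Sym2.eq_swap,
            gDegree_deleteEdges_mem hab.symm, exp_p_degree hp hexp hb1]
          omega
        have hup : edgeConn (Γ.deleteEdges {s(a, b)}) ≤ p - 2 :=
          hdeg ▸ edgeConn_le_gDegree _ b
        have hlo := edgeConn_deleteEdges_ge Γ (Γ.mem_edgeSet.2 hab)
        have hp2 := hp.two_le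
        omega
      rcases eq_or_ne v 1 with rfl | hv1
      · have hu1 : u ≠ 1 := huv.ne
        rw [show (s(u, (1 : G)) : Sym2 G) = s(1, u) from Sym2.eq_swap]
        exact key 1 u huv.symm hu1
      · exact key u v huv hv1

end AuxGroup

/-- A finite group `G` is a non-cyclic group of prime exponent if and only if its
power graph is non-complete and minimally edge-connected. -/
theorem stmt_0 (G : Type*) [Group G] [Fintype G] :
    (¬ IsCyclic G ∧ ∃ p : ℕ, p.Prime ∧ Monoid.exponent G = p) ↔
      (powerGraph G ≠ ⊤ ∧ MinimallyEdgeConnected (powerGraph G)) := by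
  classical
  constructor
  · rintro ⟨hnc, p, hp, hexp⟩
    exact forward_direction hp hnc hexp
  · rintro ⟨hNC, hME⟩
    have hNT : Nontrivial G := hME.1
    by_cases h2 : ∀ g : G, g ^ 2 = 1
    · refine ⟨?_, 2, Nat.prime_two, ?_⟩
      · intro hcyc
        obtain ⟨g, hg⟩ := hcyc.exists_generator
        apply hNC
        have hgord : orderOf g ∣ 2 := orderOf_dvd_of_pow_eq_one (h2 g)
        rcases (Nat.dvd_prime Nat.prime_two).1 hgord with h | h
        · exfalso
          obtain ⟨t, ht⟩ := exists_ne (1 : G)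
          have hg1 : g = 1 := orderOf_eq_one_iff.1 h
          have := hg t
          rw [hg1, zpowers_one_eq_bot, Subgroup.mem_bot] at this
          exact ht this
        · exact pg_eq_top_of_single_pblock Nat.prime_two (k := 1) (by rw [pow_one]; exact h) hg
      · have hdvd : Monoid.exponent G ∣ 2 := Monoid.exponent_dvd_of_forall_pow_eq_one h2
        rcases (Nat.dvd_prime Nat.prime_two).1 hdvd with h | h
        · exfalso
          obtain ⟨t, ht⟩ := exists_ne (1 : G)
          have := Monoid.pow_exponent_eq_one t
          rw [h, pow_one] at this
          exact ht this
        · exact h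
    · push_neg at h2
      obtain ⟨x, hx2⟩ := h2
      have hx3 : 3 ≤ orderOf x := by
        have h1 : orderOf x ≠ 1 := by
          intro h
          rw [orderOf_eq_one_iff.1 h] at hx2
          exact hx2 (one_pow 2)
        have h2' : orderOf x ≠ 2 := fun h => hx2 (h ▸ pow_orderOf_eq_one x)
        have h0 := orderOf_pos x
        omega
      set m := gMinDegree (powerGraph G) + 1 with hm
      have hall : ∀ z : G, IsMaxCyclicGen z → orderOf z = m :=
        fun z hz => maxgen_orderOf_eq hME hx3 hz
      have hm3 : 3 ≤ m := by
        obtain ⟨z, hxz, hzmax⟩ := exists_maxgen x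
        have h1 : orderOf x ∣ orderOf z := orderOf_dvd_of_mem_zpowers hxz
        have h2'' := hall z hzmax
        have h3 := Nat.le_of_dvd (by omega) h1
        omega
      have hmprime : m.Prime := by
        by_contra hnp
        by_cases hpp : IsPrimePow m
        · obtain ⟨p, k, hp, hk, hpk⟩ := hpp
          have hpn : p.Prime := hp.nat_prime
          have hk2 : 2 ≤ k := by
            rcases Nat.lt_or_ge k 2 with h | h
            · exfalso
              have hk1 : k = 1 := by omega
              apply hnp
              rw [← hpk, hk1, pow_one]
              exact hpn
            · exact h
          exact pp_contradiction hME hNC rfl hall hpn hk2 hpk.symm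
        · obtain ⟨a2, ha2⟩ : ∃ a2, a2 = m.factorization 2 := ⟨_, rfl⟩
          obtain ⟨r, hrdef⟩ : ∃ r, r = m / 2 ^ a2 := ⟨_, rfl⟩
          have hm0 : m ≠ 0 := by omega
          have hsplit : 2 ^ a2 * r = m := by
            rw [hrdef, ha2]
            exact Nat.ordProj_mul_ordCompl_eq_self m 2
          have hr2 : ¬ 2 ∣ r := by
            rw [hrdef, ha2]
            exact Nat.not_dvd_ordCompl Nat.prime_two hm0
          have hrge : 2 ≤ r := by
            have hr0 : r ≠ 0 := by
              intro h
              rw [h, Nat.mul_zero] at hsplit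
              exact hm0 hsplit.symm
            have hr1 : r ≠ 1 := by
              intro h
              rw [h, Nat.mul_one] at hsplit
              have ha21 : 1 ≤ a2 := by
                by_contra hc
                push_neg at hc
                have : a2 = 0 := by omega
                rw [this, pow_zero] at hsplit
                omega
              refine hpp ⟨2, a2, Nat.prime_iff.1 Nat.prime_two, ?_, hsplit⟩
              omega
            omega
          obtain ⟨q, hqdef⟩ : ∃ q, q = r.minFac := ⟨_, rfl⟩
          have hqp : q.Prime := hqdef ▸ Nat.minFac_prime (by omega)
          have hq2 : q ≠ 2 := fun h => hr2 (h ▸ hqdef ▸ r.minFac_dvd)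
          have hq3 : 3 ≤ q := by
            have := hqp.two_le
            omega
          have hqm : q ∣ m := dvd_trans (hqdef ▸ r.minFac_dvd) ⟨2 ^ a2, by rw [← hsplit]; ring⟩
          have hnq : m ≠ q ^ (m.factorization q) := by
            intro h
            apply hpp
            have hfpos : 0 < m.factorization q := hqp.factorization_pos_of_dvd hm0 hqm
            exact ⟨q, m.factorization q, Nat.prime_iff.1 hqp, hfpos, h.symm⟩
          exact no_odd_composite hME rfl hall hqp hq3 hqm hm3 hnq
      have hpow : ∀ g : G, g ^ m = 1 := by
        intro g
        obtain ⟨z, hgz, hzmax⟩ := exists_maxgen g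
        exact orderOf_dvd_iff_pow_eq_one.1 ((hall z hzmax) ▸ orderOf_dvd_of_mem_zpowers hgz)
      refine ⟨?_, m, hmprime, ?_⟩
      · intro hcyc
        obtain ⟨g, hg⟩ := hcyc.exists_generator
        apply hNC
        have hgtop : IsMaxCyclicGen g := by
          intro w hle
          have htop : zpowers g = ⊤ := by
            rw [eq_top_iff]
            intro t _
            exact hg t
          have h2' : zpowers w = ⊤ := by
            rw [eq_top_iff]
            rw [htop] at hle
            exact hle
          rw [htop, h2']
        have hgm : orderOf g = m := hall g hgtop
        exact pg_eq_top_of_single_pblock hmprime (k := 1) (by rw [pow_one]; exact hgm) hg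
      · have hdvd : Monoid.exponent G ∣ m := Monoid.exponent_dvd_of_forall_pow_eq_one hpow
        rcases (Nat.dvd_prime hmprime).1 hdvd with h | h
        · exfalso
          obtain ⟨t, ht⟩ := exists_ne (1 : G)
          have := Monoid.pow_exponent_eq_one t
          rw [h, pow_one] at this
          exact ht this
        · exact h
end

section
/- Let G be a finite group such that the power graph 𝒢(G) is minimally edge-connected. If x ∈ G has order greater than 2, then the degree of x in 𝒢(G) equals the minimum degree δ(𝒢(G)). -/
open Subgroup

section Helpers

variable {G : Type*} [Group G] [Fintype G]

lemma inv_eq_pow_order_sub_one (x : G) : x⁻¹ = x ^ (orderOf x - 1) := by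
  have hk : 1 ≤ orderOf x := orderOf_pos x
  refine inv_eq_of_mul_eq_one_right ?_
  have : x ^ (1 + (orderOf x - 1)) = 1 := by
    rw [show 1 + (orderOf x - 1) = orderOf x by omega, pow_orderOf_eq_one]
  simpa [pow_add] using this

lemma ne_inv_of_two_lt {x : G} (hx : 2 < orderOf x) : x ≠ x⁻¹ := by
  intro hxe
  have h2 : x ^ 2 = 1 := by
    rw [pow_two]; nth_rewrite 2 [hxe]; simp
  have := Nat.le_of_dvd (by norm_num) (orderOf_dvd_of_pow_eq_one h2)
  omega

lemma adj_inv_self {x : G} (hx : 2 < orderOf x) : (powerGraph G).Adj x x⁻¹ := by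
  refine ⟨ne_inv_of_two_lt hx, Or.inl ⟨orderOf x - 1, by omega, inv_eq_pow_order_sub_one x⟩⟩

lemma twin_adj {x : G} (hx : 2 < orderOf x) {w : G}
    (h : (powerGraph G).Adj x w) (hw : w ≠ x⁻¹) : (powerGraph G).Adj x⁻¹ w := by
  obtain ⟨hne, hpow⟩ := h
  have hone : x ^ orderOf x = 1 := pow_orderOf_eq_one x
  refine ⟨fun h' => hw h'.symm, ?_⟩
  rcases hpow with ⟨n, hn, rfl⟩ | ⟨m, hm, hxm⟩
  · refine Or.inl ⟨n * (orderOf x - 1), Nat.mul_pos hn (by omega), ?_⟩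
    rw [inv_pow]
    refine (inv_eq_of_mul_eq_one_right ?_).symm
    have harr : n * (orderOf x - 1) + n = n * orderOf x := by
      have h1 : orderOf x - 1 + 1 = orderOf x := by omega
      calc n * (orderOf x - 1) + n = n * (orderOf x - 1 + 1) := by ring
        _ = n * orderOf x := by rw [h1]
    rw [← pow_add, harr, mul_comm, pow_mul, hone, one_pow]
  · refine Or.inr ⟨m * (orderOf x - 1), Nat.mul_pos hm (by omega), ?_⟩
    rw [inv_eq_pow_order_sub_one x, hxm, ← pow_mul]

lemma reach_lift {V : Type*} {Γ' Γ'' : SimpleGraph V}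
    (h : ∀ a b, Γ''.Adj a b → Γ'.Reachable a b) {u v : V} (hr : Γ''.Reachable u v) :
    Γ'.Reachable u v := by
  obtain ⟨p⟩ := hr
  induction p with
  | nil => exact SimpleGraph.Reachable.refl _
  | cons ha _ ih => exact (h _ _ ha).trans ih

lemma reach_eq_of_no_adj {V : Type*} {Δ : SimpleGraph V} (h : ∀ a b, ¬ Δ.Adj a b)
    {a b : V} (hr : Δ.Reachable a b) : a = b := by
  obtain ⟨p⟩ := hr
  cases p with
  | nil => rfl
  | cons ha _ => exact absurd ha (h _ _)

/-- the cut-set defining edgeConn is nonempty for finite nontrivial V -/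
lemma cutset_nonempty {V : Type*} [Fintype V] [Nontrivial V] (Δ : SimpleGraph V) :
    {k | ∃ s : Finset (Sym2 V), s.card = k ∧ ↑s ⊆ Δ.edgeSet ∧
      ¬ (Δ.deleteEdges ↑s).Connected}.Nonempty := by
  classical
  refine ⟨_, Δ.edgeSet.toFinite.toFinset, rfl, by rw [Set.Finite.coe_toFinset], ?_⟩
  intro hc
  obtain ⟨a, b, hab⟩ := exists_pair_ne V
  refine hab (reach_eq_of_no_adj ?_ (hc.preconnected a b))
  intro u v huv
  rw [SimpleGraph.deleteEdges_adj, Set.Finite.coe_toFinset] at huv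
  exact huv.2 huv.1

end Helpers

/-- If the power graph of a finite group is minimally edge-connected and `x` has
order greater than 2, then the degree of `x` equals the minimum degree. -/
theorem stmt_2 (G : Type*) [Group G] [Fintype G]
    (h : MinimallyEdgeConnected (powerGraph G)) (x : G) (hx : 2 < orderOf x) :
    gDegree (powerGraph G) x = gMinDegree (powerGraph G) := by
  classical
  obtain ⟨hnt, hconn, hmin⟩ := h
  have hx2 : x ≠ x⁻¹ := ne_inv_of_two_lt hx
  have hadj : (powerGraph G).Adj x x⁻¹ := adj_inv_self hx
  set Γ : SimpleGraph G := powerGraph G with hΓ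
  set e : Sym2 G := s(x, x⁻¹) with he_def
  have he : e ∈ Γ.edgeSet := hadj
  -- edgeConn Γ ≥ 1
  have hne : _ := cutset_nonempty Γ
  have hpos : 1 ≤ edgeConn Γ := by
    rcases Nat.sInf_mem hne with ⟨s0, hs0card, _, hs0conn⟩
    by_contra hc
    have h0 : edgeConn Γ = 0 := by omega
    rw [edgeConn] at h0
    rw [h0] at hs0card
    rw [Finset.card_eq_zero] at hs0card
    subst hs0card
    rw [Finset.coe_empty, SimpleGraph.deleteEdges_empty] at hs0conn
    exact hs0conn hconn
  -- get the cut s of Γ - e of size edgeConn Γ - 1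
  have hcut := hmin e he
  obtain ⟨s, hscard, hssub, hsconn⟩ := Nat.sInf_mem (cutset_nonempty (Γ.deleteEdges {e}))
  rw [show sInf {k | ∃ s : Finset (Sym2 G), s.card = k ∧
      ↑s ⊆ (Γ.deleteEdges {e}).edgeSet ∧
      ¬ ((Γ.deleteEdges {e}).deleteEdges ↑s).Connected} = edgeConn (Γ.deleteEdges {e}) from rfl,
    hcut] at hscard
  have hes : e ∉ s := by
    intro hmem
    have := hssub hmem
    rw [SimpleGraph.edgeSet_deleteEdges] at this
    exact this.2 rfl
  set F : Finset (Sym2 G) := insert e s with hF_def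
  have hFcard : F.card = edgeConn Γ := by
    rw [hF_def, Finset.card_insert_of_notMem hes]; omega
  have hssubΓ : ↑s ⊆ Γ.edgeSet := by
    intro a ha
    exact ((SimpleGraph.edgeSet_deleteEdges ({e} : Set (Sym2 G))) ▸ hssub ha).1
  have hFsubΓ : (↑F : Set (Sym2 G)) ⊆ Γ.edgeSet := by
    rw [hF_def, Finset.coe_insert]
    rintro a (rfl | ha)
    · exact he
    · exact hssubΓ ha
  have hdel : (Γ.deleteEdges {e}).deleteEdges ↑s = Γ.deleteEdges ↑F := by
    ext a b
    simp only [SimpleGraph.deleteEdges_adj, hF_def, Finset.coe_insert,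
      Set.mem_insert_iff, Set.mem_singleton_iff, Finset.mem_coe]
    tauto
  have hFconn : ¬ (Γ.deleteEdges (↑F : Set (Sym2 G))).Connected := hdel ▸ hsconn
  have hGne : Nonempty G := ⟨1⟩
  obtain ⟨a, b, hab⟩ : ∃ a b : G, ¬ (Γ.deleteEdges (↑F : Set (Sym2 G))).Reachable a b := by
    by_contra hcc
    push_neg at hcc
    exact hFconn ⟨fun u v => hcc u v⟩
  -- x and x⁻¹ are not reachable in Γ - F
  have hxreach : ¬ (Γ.deleteEdges (↑F : Set (Sym2 G))).Reachable x x⁻¹ := by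
    intro hr
    have hlift : ∀ u v, (Γ.deleteEdges (↑s : Set (Sym2 G))).Adj u v →
        (Γ.deleteEdges (↑F : Set (Sym2 G))).Reachable u v := by
      intro u v huv
      rw [SimpleGraph.deleteEdges_adj] at huv
      by_cases hcase : s(u, v) = e
      · rw [he_def, Sym2.eq_iff] at hcase
        rcases hcase with ⟨rfl, rfl⟩ | ⟨rfl, rfl⟩
        · exact hr
        · exact hr.symm
      · refine SimpleGraph.Adj.reachable ?_
        rw [SimpleGraph.deleteEdges_adj]
        refine ⟨huv.1, ?_⟩
        rw [hF_def, Finset.coe_insert]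
        rintro (h1 | h1)
        · exact hcase h1
        · exact huv.2 h1
    have hnc : ¬ (Γ.deleteEdges (↑s : Set (Sym2 G))).Connected := by
      intro hc
      exact hab (reach_lift hlift (hc.preconnected a b))
    have hle : edgeConn Γ ≤ s.card := Nat.sInf_le ⟨s, rfl, hssubΓ, hnc⟩
    omega
  -- degree of x ≤ F.card
  have hdeg : gDegree Γ x ≤ edgeConn Γ := by
    rw [← hFcard]
    set f : G → Sym2 G := fun w => if s(x, w) ∈ F then s(x, w) else s(x⁻¹, w) with hf_def
    have heF : e ∈ F := Finset.mem_insert_self e s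
    have hmaps : ∀ w ∈ Γ.neighborSet x, f w ∈ (↑F : Set (Sym2 G)) := by
      intro w hw
      rw [SimpleGraph.mem_neighborSet] at hw
      by_cases h1 : s(x, w) ∈ F
      · simp only [hf_def, if_pos h1]; exact h1
      · simp only [hf_def, if_neg h1]
        have hadjxw : (Γ.deleteEdges (↑F : Set (Sym2 G))).Adj x w := by
          rw [SimpleGraph.deleteEdges_adj]
          exact ⟨hw, fun hc => h1 (Finset.mem_coe.1 hc)⟩
        have hrxw : (Γ.deleteEdges (↑F : Set (Sym2 G))).Reachable x w := hadjxw.reachable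
        have hwne : w ≠ x⁻¹ := by rintro rfl; exact hxreach hrxw
        have hadj' : Γ.Adj x⁻¹ w := twin_adj hx hw hwne
        by_contra h2
        have : (Γ.deleteEdges (↑F : Set (Sym2 G))).Adj x⁻¹ w := by
          rw [SimpleGraph.deleteEdges_adj]
          exact ⟨hadj', fun hc => h2 (Finset.mem_coe.1 hc)⟩
        exact hxreach (hrxw.trans this.reachable.symm)
    have hinj : Set.InjOn f (Γ.neighborSet x) := by
      intro w1 hw1 w2 hw2 heq
      rw [SimpleGraph.mem_neighborSet] at hw1 hw2
      have hw1x : w1 ≠ x := fun hc => (hc ▸ hw1).ne rfl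
      have hw2x : w2 ≠ x := fun hc => (hc ▸ hw2).ne rfl
      simp only [hf_def] at heq
      split_ifs at heq with h1 h2 h2
      · exact Sym2.congr_right.1 heq
      · rw [Sym2.eq_iff] at heq
        rcases heq with ⟨hc, _⟩ | ⟨hc, _⟩
        · exact absurd hc hx2
        · exact absurd hc.symm hw2x
      · rw [Sym2.eq_iff] at heq
        rcases heq with ⟨hc, _⟩ | ⟨hc, hc2⟩
        · exact absurd hc.symm hx2
        · exact absurd hc2 hw1x
      · rw [Sym2.eq_iff] at heq
        rcases heq with ⟨_, hc⟩ | ⟨hc, hc2⟩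
        · exact hc
        · exfalso
          apply h1
          rw [hc2, ← he_def]
          exact heF
    calc gDegree Γ x = (Γ.neighborSet x).ncard := rfl
      _ = (f '' (Γ.neighborSet x)).ncard := (Set.ncard_image_of_injOn hinj).symm
      _ ≤ (↑F : Set (Sym2 G)).ncard := Set.ncard_le_ncard
            (Set.image_subset_iff.2 hmaps) (Set.toFinite _)
      _ = F.card := Set.ncard_coe_finset F
  -- edgeConn ≤ every degree
  have hmind : ∀ y : G, edgeConn Γ ≤ gDegree Γ y := by
    intro y
    have hIfin : (Γ.incidenceSet y).Finite := Set.toFinite _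
    have hcardI : hIfin.toFinset.card = gDegree Γ y := by
      rw [← Set.ncard_eq_toFinset_card _ hIfin]
      rw [gDegree, ← Nat.card_coe_set_eq, ← Nat.card_coe_set_eq]
      exact Nat.card_congr (Γ.incidenceSetEquivNeighborSet y)
    refine Nat.sInf_le ⟨hIfin.toFinset, hcardI, ?_, ?_⟩
    · rw [Set.Finite.coe_toFinset]; exact Γ.incidenceSet_subset y
    · intro hc
      obtain ⟨z, hz⟩ := exists_ne y
      have hiso : ∀ v, ¬ (Γ.deleteEdges (↑hIfin.toFinset : Set (Sym2 G))).Adj y v := by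
        intro v hv
        rw [SimpleGraph.deleteEdges_adj, Set.Finite.coe_toFinset] at hv
        exact hv.2 ⟨hv.1, Sym2.mem_mk_left y v⟩
      have := hc.preconnected y z
      obtain ⟨p⟩ := this
      cases p with
      | nil => exact hz rfl
      | cons ha _ => exact hiso _ ha
  have h1 : edgeConn Γ ≤ gMinDegree Γ := by
    refine le_csInf ⟨gDegree Γ 1, ⟨1, rfl⟩⟩ ?_
    rintro _ ⟨y, rfl⟩
    exact hmind y
  have h2 : gMinDegree Γ ≤ gDegree Γ x := Nat.sInf_le ⟨x, rfl⟩
  omega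
end

section
/- Let G be a finite group such that the power graph 𝒢(G) is minimally edge-connected. If ⟨y⟩ is a maximal cyclic subgroup of G and the order of y is greater than 2, then the order of y equals δ(𝒢(G)) + 1. -/
open Subgroup

section graph

variable {V : Type*}

lemma pg_not_connected_of_isolated {H : SimpleGraph V} (x u : V) (hxu : x ≠ u)
    (h : ∀ b, ¬ H.Adj x b) : ¬ H.Connected := by
  intro hc
  obtain ⟨w⟩ := hc.preconnected x u
  cases w with
  | nil => exact hxu rfl
  | cons h' _ => exact h _ h'

lemma pg_edgeConn_set_nonempty [Fintype V] [Nontrivial V] (H : SimpleGraph V) :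
    {k | ∃ s : Finset (Sym2 V), s.card = k ∧ ↑s ⊆ H.edgeSet ∧
      ¬ (H.deleteEdges ↑s).Connected}.Nonempty := by
  classical
  refine ⟨(H.edgeSet.toFinite.toFinset).card, H.edgeSet.toFinite.toFinset, rfl, by rw [Set.Finite.coe_toFinset], ?_⟩
  obtain ⟨u, v, huv⟩ := exists_pair_ne V
  refine pg_not_connected_of_isolated u v huv (fun b hb => ?_)
  rw [SimpleGraph.deleteEdges_adj] at hb
  exact hb.2 (by simpa using hb.1)

lemma pg_edgeConn_spec [Fintype V] [Nontrivial V] (H : SimpleGraph V) :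
    ∃ s : Finset (Sym2 V), s.card = edgeConn H ∧ ↑s ⊆ H.edgeSet ∧
      ¬ (H.deleteEdges ↑s).Connected :=
  Nat.sInf_mem (pg_edgeConn_set_nonempty H)

lemma pg_edgeConn_le {H : SimpleGraph V} {s : Finset (Sym2 V)} (h1 : ↑s ⊆ H.edgeSet)
    (h2 : ¬ (H.deleteEdges ↑s).Connected) : edgeConn H ≤ s.card :=
  Nat.sInf_le ⟨s, rfl, h1, h2⟩

lemma pg_edgeConn_pos [Fintype V] [Nontrivial V] {H : SimpleGraph V} (hc : H.Connected) :
    1 ≤ edgeConn H := by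
  by_contra hk
  obtain ⟨s, hcard, -, hdisc⟩ := pg_edgeConn_spec H
  rw [Nat.not_le, Nat.lt_one_iff] at hk
  rw [hk, Finset.card_eq_zero] at hcard
  subst hcard
  simp only [Finset.coe_empty, SimpleGraph.deleteEdges_empty] at hdisc
  exact hdisc hc

lemma pg_edgeConn_le_degree [Fintype V] [Nontrivial V] (H : SimpleGraph V) (x : V) :
    edgeConn H ≤ (H.neighborSet x).ncard := by
  classical
  set s : Finset (Sym2 V) := (H.neighborSet x).toFinite.toFinset.image (fun v => s(x, v)) with hs
  have hinj : Set.InjOn (fun v => s(x, v)) ((H.neighborSet x).toFinite.toFinset : Set V) := by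
    intro a ha b hb hab
    simp only [Set.Finite.coe_toFinset, SimpleGraph.mem_neighborSet] at ha hb
    rcases Sym2.eq_iff.mp hab with ⟨-, h⟩ | ⟨h1, h2⟩
    · exact h
    · exact absurd h1.symm hb.ne'
  have hcard : s.card = (H.neighborSet x).ncard := by
    rw [hs, Finset.card_image_of_injOn hinj, ← Set.ncard_eq_toFinset_card]
  rw [← hcard]
  refine pg_edgeConn_le ?_ ?_
  · intro e he
    simp only [hs, Finset.coe_image, Set.Finite.coe_toFinset, Set.mem_image] at he
    obtain ⟨v, hv, rfl⟩ := he
    exact hv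
  · obtain ⟨u, hu⟩ := exists_ne x
    refine pg_not_connected_of_isolated x u (Ne.symm hu) (fun b hb => ?_)
    rw [SimpleGraph.deleteEdges_adj] at hb
    refine hb.2 ?_
    simp only [hs, Finset.coe_image, Set.Finite.coe_toFinset, Set.mem_image]
    exact ⟨b, hb.1, rfl⟩

lemma pg_reachable_transfer {H H' : SimpleGraph V} {u v : V}
    (hadj : ∀ a b, H'.Adj a b → H.Adj a b ∨ s(a, b) = s(u, v))
    (hre : H.Reachable u v) {p q : V} (h : H'.Reachable p q) : H.Reachable p q := by
  obtain ⟨w⟩ := h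
  induction w with
  | nil => exact SimpleGraph.Reachable.refl _
  | cons h' w ih =>
    rcases hadj _ _ h' with h'' | h''
    · exact (h''.reachable).trans ih
    · rcases Sym2.eq_iff.mp h'' with ⟨rfl, rfl⟩ | ⟨rfl, rfl⟩
      · exact hre.trans ih
      · exact hre.symm.trans ih
end graph


section grp
variable {G : Type*} [Group G] [Fintype G]

lemma pg_powerGraph_adj_iff {u v : G} : (powerGraph G).Adj u v ↔
    (u ≠ v ∧ ((∃ n : ℕ, 0 < n ∧ v = u ^ n) ∨ (∃ m : ℕ, 0 < m ∧ u = v ^ m))) := Iff.rfl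

lemma pg_adj_one_s3 (x : G) (hx : x ≠ 1) : (powerGraph G).Adj 1 x :=
  pg_powerGraph_adj_iff.mpr ⟨fun h => hx h.symm, Or.inr ⟨orderOf x, orderOf_pos x, (pow_orderOf_eq_one x).symm⟩⟩

lemma pg_neighborSet (y : G) (hy : IsMaxCyclicGen y) :
    (powerGraph G).neighborSet y = (zpowers y : Set G) \ {y} := by
  ext x
  simp only [SimpleGraph.mem_neighborSet, Set.mem_diff, Set.mem_singleton_iff, SetLike.mem_coe, pg_powerGraph_adj_iff]
  constructor
  · rintro ⟨hne, hor⟩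
    rcases hor with h | h
    · obtain ⟨n, -, rfl⟩ := h
      exact ⟨mem_zpowers_iff.mpr ⟨(n : ℤ), zpow_natCast y n⟩, fun h => hne h.symm⟩
    · obtain ⟨mm, -, hm⟩ := h
      have h1 : zpowers y ≤ zpowers x :=
        zpowers_le.mpr (mem_zpowers_iff.mpr ⟨(mm : ℤ), by rw [zpow_natCast]; exact hm.symm⟩)
      have h2 := hy x h1
      exact ⟨h2 ▸ mem_zpowers x, fun h => hne h.symm⟩
  · rintro ⟨hx, hne⟩
    rw [← mem_powers_iff_mem_zpowers] at hx
    obtain ⟨n, rfl⟩ := hx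
    rcases Nat.eq_zero_or_pos n with rfl | hn
    · exact ⟨fun h => hne h.symm, Or.inl ⟨orderOf y, orderOf_pos y, by
        simp [pow_orderOf_eq_one]⟩⟩
    · exact ⟨fun h => hne h.symm, Or.inl ⟨n, hn, rfl⟩⟩

lemma pg_degree (y : G) (hy : IsMaxCyclicGen y) :
    gDegree (powerGraph G) y = orderOf y - 1 := by
  rw [gDegree, pg_neighborSet y hy, Set.ncard_diff_singleton_of_mem (mem_zpowers y)]
  congr 1
  rw [← Nat.card_zpowers y, ← Nat.card_coe_set_eq]
  rfl
end grp

/-- If the power graph of a finite group is minimally edge-connected, `⟨y⟩` is a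
maximal cyclic subgroup and `y` has order greater than 2, then the order of `y`
equals the minimum degree plus one. -/
theorem stmt_3 (G : Type*) [Group G] [Fintype G]
    (h : MinimallyEdgeConnected (powerGraph G)) (y : G) (hy : IsMaxCyclicGen y)
    (hy2 : 2 < orderOf y) :
    orderOf y = gMinDegree (powerGraph G) + 1 := by
  classical
  obtain ⟨hnt, hconn, hmin⟩ := h
  haveI : Nontrivial G := hnt
  haveI : Nonempty G := ⟨1⟩
  have hy1 : y ≠ 1 := by
    intro hh; rw [hh, orderOf_one] at hy2; omega
  set Γ := powerGraph G with hΓ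
  set m := orderOf y with hm
  have hm3 : 3 ≤ m := hy2
  set k := edgeConn Γ with hk
  have hadj1y : Γ.Adj 1 y := pg_adj_one_s3 y hy1
  have hk1 : 1 ≤ k := pg_edgeConn_pos hconn
  have hdel : edgeConn (Γ.deleteEdges {s(1, y)}) = k - 1 := hmin _ hadj1y
  obtain ⟨s, hscard, hssub, hsdisc⟩ := pg_edgeConn_spec (Γ.deleteEdges {s(1, y)})
  rw [hdel] at hscard
  have hεs : s(1, y) ∉ s := by
    intro hmem
    have h2 := hssub hmem
    rw [SimpleGraph.edgeSet_deleteEdges] at h2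
    exact h2.2 rfl
  have hssubΓ : ↑s ⊆ Γ.edgeSet := by
    intro e he
    have h2 := hssub he
    rw [SimpleGraph.edgeSet_deleteEdges] at h2
    exact h2.1
  set F : Finset (Sym2 G) := insert s(1, y) s with hF
  have hFcard : F.card = k := by
    rw [hF, Finset.card_insert_of_notMem hεs, hscard]; omega
  have hFsub : ↑F ⊆ Γ.edgeSet := by
    intro e he
    rcases Finset.mem_insert.mp he with rfl | hmem
    · exact hadj1y
    · exact hssubΓ hmem
  have hFeq : Γ.deleteEdges ↑F = (Γ.deleteEdges {s(1, y)}).deleteEdges ↑s := by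
    ext a b
    simp only [SimpleGraph.deleteEdges_adj, hF, Finset.coe_insert, Set.mem_insert_iff,
      Set.mem_singleton_iff, Finset.mem_coe]
    tauto
  set H := Γ.deleteEdges ↑F with hH
  have hHdisc : ¬ H.Connected := by rw [hFeq]; exact hsdisc
  have hsconn : (Γ.deleteEdges ↑s).Connected := by
    by_contra hnc
    have hle := pg_edgeConn_le hssubΓ hnc
    rw [hscard] at hle
    omega
  have hnotre : ¬ H.Reachable 1 y := by
    intro hre
    have hpre : ∀ p q : G, H.Reachable p q := by
      intro p q
      refine pg_reachable_transfer (fun a b hab => ?_) hre (hsconn.preconnected p q)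
      rw [SimpleGraph.deleteEdges_adj] at hab
      by_cases hc : s(a, b) = s(1, y)
      · exact Or.inr hc
      · refine Or.inl ?_
        rw [hH, SimpleGraph.deleteEdges_adj]
        refine ⟨hab.1, ?_⟩
        rw [hF, Finset.coe_insert, Set.mem_insert_iff]
        push_neg
        exact ⟨hc, hab.2⟩
    exact hHdisc ⟨fun p q => hpre p q⟩
  set A : Set G := {v | H.Reachable 1 v} with hA
  have h1A : (1 : G) ∈ A := SimpleGraph.Reachable.refl 1
  have hyA : y ∈ Aᶜ := hnotre
  set S : Set G := (zpowers y : Set G) \ {y} with hS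
  have hSnb : S = Γ.neighborSet y := (pg_neighborSet y hy).symm
  set E1 : Set (Sym2 G) := (fun v => s((1 : G), v)) '' Aᶜ with hE1
  set E2 : Set (Sym2 G) := (fun u => s(y, u)) '' (A ∩ S) with hE2
  have hE1F : E1 ⊆ ↑F := by
    rintro _ ⟨v, hv, rfl⟩
    by_contra hnot
    have hv1 : v ≠ 1 := fun hh => hv (hh ▸ h1A)
    have hadj : H.Adj 1 v := by
      rw [hH, SimpleGraph.deleteEdges_adj]
      exact ⟨pg_adj_one_s3 v hv1, hnot⟩
    exact hv hadj.reachable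
  have hE2F : E2 ⊆ ↑F := by
    rintro _ ⟨u, ⟨huA, huS⟩, rfl⟩
    by_contra hnot
    have hadjΓ : Γ.Adj y u := by
      rw [← SimpleGraph.mem_neighborSet, ← hSnb]; exact huS
    have hadj : H.Adj y u := by
      rw [hH, SimpleGraph.deleteEdges_adj]; exact ⟨hadjΓ, hnot⟩
    exact hyA (huA.trans hadj.symm.reachable)
  have hE1card : E1.ncard = Aᶜ.ncard := Set.ncard_image_of_injOn (by
    rintro a ha b hb hab
    rcases Sym2.eq_iff.mp hab with ⟨-, hh⟩ | ⟨h1, h2⟩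
    · exact hh
    · subst h2; exact absurd h1A ha)
  have hE2card : E2.ncard = (A ∩ S).ncard := Set.ncard_image_of_injOn (by
    rintro a ha b hb hab
    rcases Sym2.eq_iff.mp hab with ⟨-, hh⟩ | ⟨h1, h2⟩
    · exact hh
    · exact absurd h2 ha.2.2)
  have hE12 : E1 ∩ E2 ⊆ {s((1 : G), y)} := by
    rintro e ⟨⟨v, hv, rfl⟩, ⟨u, hu, he⟩⟩
    rcases Sym2.eq_iff.mp he with ⟨h1, h2⟩ | ⟨h1, h2⟩
    · exact absurd h1 hy1
    · rw [Set.mem_singleton_iff, ← h1]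
  have hfinF : (↑F : Set (Sym2 G)).Finite := F.finite_toSet
  have hE1fin : E1.Finite := hfinF.subset hE1F
  have hE2fin : E2.Finite := hfinF.subset hE2F
  have hunion : (E1 ∪ E2).ncard + (E1 ∩ E2).ncard = Aᶜ.ncard + (A ∩ S).ncard := by
    rw [Set.ncard_union_add_ncard_inter E1 E2 hE1fin hE2fin, hE1card, hE2card]
  have hle1 : (E1 ∪ E2).ncard ≤ k := by
    calc (E1 ∪ E2).ncard ≤ (↑F : Set (Sym2 G)).ncard :=
          Set.ncard_le_ncard (Set.union_subset hE1F hE2F) hfinF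
      _ = k := by rw [Set.ncard_coe_finset, hFcard]
  have hle2 : (E1 ∩ E2).ncard ≤ 1 := by
    calc (E1 ∩ E2).ncard ≤ ({s((1 : G), y)} : Set (Sym2 G)).ncard :=
          Set.ncard_le_ncard hE12 (Set.finite_singleton _)
      _ = 1 := Set.ncard_singleton _
  have hAc1 : 1 ≤ Aᶜ.ncard := by
    exact (Set.ncard_pos (Set.toFinite _)).mpr ⟨y, hyA⟩
  have hq : (Aᶜ ∩ S).ncard ≤ Aᶜ.ncard - 1 := by
    calc (Aᶜ ∩ S).ncard ≤ (Aᶜ \ {y}).ncard := by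
          refine Set.ncard_le_ncard (fun u hu => ⟨hu.1, ?_⟩) (Set.toFinite _)
          intro hh
          exact hu.2.2 hh
      _ = Aᶜ.ncard - 1 := Set.ncard_diff_singleton_of_mem hyA
  have hScard : S.ncard = m - 1 := by
    rw [hSnb]
    exact pg_degree y hy
  have hsplit : (A ∩ S).ncard + (Aᶜ ∩ S).ncard = m - 1 := by
    have hun : (A ∩ S) ∪ (Aᶜ ∩ S) = S := by
      rw [← Set.union_inter_distrib_right, Set.union_compl_self, Set.univ_inter]
    have hdisj : (A ∩ S) ∩ (Aᶜ ∩ S) = ∅ := by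
      ext u
      simp only [Set.mem_inter_iff, Set.mem_compl_iff, Set.mem_empty_iff_false, iff_false]
      tauto
    have hh := Set.ncard_union_add_ncard_inter (A ∩ S) (Aᶜ ∩ S) (Set.toFinite _) (Set.toFinite _)
    rw [hun, hdisj, Set.ncard_empty, Nat.add_zero, hScard] at hh
    omega
  have hmk : m - 1 ≤ k := by omega
  have hdegy : gDegree Γ y = m - 1 := pg_degree y hy
  have hmd_le : gMinDegree Γ ≤ m - 1 := hdegy ▸ Nat.sInf_le ⟨y, rfl⟩
  have hmd_ge : m - 1 ≤ gMinDegree Γ := by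
    obtain ⟨x, hx⟩ := Nat.sInf_mem (⟨gDegree Γ 1, 1, rfl⟩ : (Set.range (gDegree Γ)).Nonempty)
    calc m - 1 ≤ k := hmk
      _ ≤ gDegree Γ x := pg_edgeConn_le_degree Γ x
      _ = gMinDegree Γ := hx
  omega
end

section
/- Let Γ be a graph with an edge ε such that Γ−ε is connected. If κ(Γ−ε) = κ(Γ)−1, then no minimum separating set of Γ−ε contains an endpoint of ε. -/
open Subgroup

lemma induce_delete_eq {V : Type*} (Γ : SimpleGraph V) {u v : V} {S : Set V} (hu : u ∈ S) :
    (Γ.deleteEdges {s(u, v)}).induce Sᶜ = Γ.induce Sᶜ := by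
  ext ⟨a, ha⟩ ⟨b, hb⟩
  simp only [SimpleGraph.comap_adj, SimpleGraph.deleteEdges_adj, Set.mem_singleton_iff,
    Sym2.eq, Sym2.rel_iff', Prod.mk.injEq, Prod.swap_prod_mk, Function.Embedding.coe_subtype]
  constructor
  · rintro ⟨h, -⟩; exact h
  · intro h
    refine ⟨h, ?_⟩
    rintro (⟨rfl, rfl⟩ | ⟨rfl, rfl⟩)
    · exact ha hu
    · exact hb hu

lemma preconn_of_subsingleton {V : Type*} (Γ : SimpleGraph V) {S : Set V}
    (h : Sᶜ.Subsingleton) : (Γ.induce Sᶜ).Preconnected := by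
  intro a b
  have : a = b := Subtype.ext (h a.2 b.2)
  rw [this]

lemma key_lemma {V : Type*} [Fintype V] (Γ : SimpleGraph V) {u v : V} (S : Set V)
    (hk : vertConn (Γ.deleteEdges {s(u, v)}) = vertConn Γ - 1)
    (hmin : IsMinSeparatingSet (Γ.deleteEdges {s(u, v)}) S) (hu : u ∈ S) : False := by
  have hΓsep : IsSeparatingSet Γ S := by
    have := hmin.1
    rwa [IsSeparatingSet, induce_delete_eq Γ hu] at this
  have hfin : S.Finite := Set.toFinite S
  have h1 : vertConn Γ ≤ S.ncard := Nat.sInf_le ⟨S, hfin, rfl, Or.inl hΓsep⟩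
  have hne : {k | ∃ T : Set V, T.Finite ∧ T.ncard = k ∧
      (¬ ((Γ.deleteEdges {s(u, v)}).induce Tᶜ).Preconnected ∨ Tᶜ.Subsingleton)}.Nonempty :=
    ⟨S.ncard, S, hfin, rfl, Or.inl hmin.1⟩
  obtain ⟨T, hTfin, hTcard, hTalt⟩ := Nat.sInf_mem hne
  change T.ncard = vertConn (Γ.deleteEdges {s(u, v)}) at hTcard
  rw [hk] at hTcard
  have hSpos : 0 < S.ncard := (Set.ncard_pos hfin).2 ⟨u, hu⟩
  rcases hTalt with hsep | hsub
  · have h2 := hmin.2 T hsep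
    rw [hTcard] at h2
    omega
  · have hns : ¬ Sᶜ.Subsingleton := fun h => hΓsep (preconn_of_subsingleton Γ h)
    rw [Set.not_subsingleton_iff] at hns
    have hScomp : 2 ≤ Sᶜ.ncard := (Set.one_lt_ncard (Set.toFinite _)).2 hns
    have hTcomp : Tᶜ.ncard ≤ 1 :=
      (Set.ncard_le_one (Set.toFinite Tᶜ)).2 fun a ha b hb => hsub ha hb
    have e1 : S.ncard + Sᶜ.ncard = Nat.card V := Set.ncard_add_ncard_compl S
    have e2 : T.ncard + Tᶜ.ncard = Nat.card V := Set.ncard_add_ncard_compl T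
    rw [hTcard] at e2
    omega

/-- If `Γ − ε` is connected and `κ(Γ − ε) = κ(Γ) − 1`, then no minimum separating
set of `Γ − ε` contains an endpoint of `ε`. -/
theorem stmt_5 {V : Type*} [Fintype V] (Γ : SimpleGraph V) {u v : V} (huv : Γ.Adj u v)
    (hconn : (Γ.deleteEdges {s(u, v)}).Connected)
    (hk : vertConn (Γ.deleteEdges {s(u, v)}) = vertConn Γ - 1) :
    ∀ S : Set V, IsMinSeparatingSet (Γ.deleteEdges {s(u, v)}) S → u ∉ S ∧ v ∉ S := by
  intro S hS
  constructor
  · intro hu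
    exact key_lemma Γ S hk hS hu
  · intro hv
    rw [Sym2.eq_swap] at hk hS
    exact key_lemma Γ S hk hS hv
end

section
/- For a finite group G, the power graph 𝒢(G) is a complete graph if and only if G is a cyclic group whose order is 1 or a prime power. -/
open Subgroup

lemma mem_zpowers_of_orderOf_dvd_s6 {G : Type*} [Group G] [Fintype G] [IsCyclic G]
    {u v : G} (h : orderOf u ∣ orderOf v) : u ∈ zpowers v := by
  classical
  set n := orderOf v with hn
  have hn0 : 0 < n := orderOf_pos v
  have hfilter : (Finset.univ.filter fun x : G => x ^ n = 1).card ≤ n :=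
    IsCyclic.card_pow_eq_one_le hn0
  have hsub : (zpowers v : Set G).toFinset ⊆ Finset.univ.filter fun x : G => x ^ n = 1 := by
    intro x hx
    simp only [Set.mem_toFinset, SetLike.mem_coe] at hx
    simp only [Finset.mem_filter, Finset.mem_univ, true_and]
    exact orderOf_dvd_iff_pow_eq_one.mp (orderOf_dvd_of_mem_zpowers hx)
  have hcard : (zpowers v : Set G).toFinset.card = n := by
    rw [Set.toFinset_card]
    rw [hn, ← Fintype.card_zpowers (x := v)]
    exact Fintype.card_congr (Equiv.setCongr rfl)
  have heq : (Finset.univ.filter fun x : G => x ^ n = 1) ⊆ (zpowers v : Set G).toFinset :=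
    Finset.eq_of_subset_of_card_le hsub (hcard ▸ hfilter) ▸ Finset.Subset.refl _
  have hu : u ∈ Finset.univ.filter fun x : G => x ^ n = 1 := by
    simp only [Finset.mem_filter, Finset.mem_univ, true_and]
    exact orderOf_dvd_iff_pow_eq_one.mp h
  have := heq hu
  simpa using this

lemma adj_of_orderOf_dvd {G : Type*} [Group G] [Fintype G] [IsCyclic G]
    {u v : G} (h : orderOf u ∣ orderOf v) : ∃ m : ℕ, 0 < m ∧ u = v ^ m := by
  have hm := mem_zpowers_of_orderOf_dvd_s6 h
  rw [← mem_powers_iff_mem_zpowers] at hm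
  obtain ⟨m, hm⟩ := hm
  rcases Nat.eq_zero_or_pos m with rfl | hmpos
  · refine ⟨orderOf v, orderOf_pos v, ?_⟩
    simp only [pow_zero] at hm
    rw [← hm, pow_orderOf_eq_one]
  · exact ⟨m, hmpos, hm.symm⟩

/-- The power graph of a finite group is complete iff the group is cyclic of
order one or prime power order. -/
theorem stmt_6 (G : Type*) [Group G] [Fintype G] :
    powerGraph G = ⊤ ↔ IsCyclic G ∧ (Nat.card G = 1 ∨ IsPrimePow (Nat.card G)) := by
  constructor
  · intro h
    have hadj : ∀ u v : G, u ≠ v →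
        ((∃ n : ℕ, 0 < n ∧ v = u ^ n) ∨ (∃ m : ℕ, 0 < m ∧ u = v ^ m)) := by
      intro u v huv
      have : (powerGraph G).Adj u v := by rw [h]; exact huv
      exact this.2
    -- comparability of cyclic subgroups
    have hcomp : ∀ u v : G, zpowers u ≤ zpowers v ∨ zpowers v ≤ zpowers u := by
      intro u v
      rcases eq_or_ne u v with rfl | huv
      · exact Or.inl le_rfl
      rcases hadj u v huv with ⟨n, _, rfl⟩ | ⟨m, _, rfl⟩
      · exact Or.inr (zpowers_le.mpr (mem_zpowers_iff.mpr ⟨(n : ℤ), by simp⟩))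
      · exact Or.inl (zpowers_le.mpr (mem_zpowers_iff.mpr ⟨(m : ℤ), by simp⟩))
    -- cyclic: pick element of maximal order
    obtain ⟨g, -, hg⟩ := Finset.exists_max_image Finset.univ orderOf ⟨(1 : G), Finset.mem_univ 1⟩
    have hcyc : IsCyclic G := by
      refine ⟨g, fun x => ?_⟩
      rcases hcomp x g with h1 | h1
      · exact h1 (mem_zpowers x)
      · have hle : orderOf g ≤ orderOf x := by
          rw [← Nat.card_zpowers, ← Nat.card_zpowers]
          exact Nat.card_mono (Set.toFinite _) h1
        have hge : orderOf x ≤ orderOf g := hg x (Finset.mem_univ x)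
        have hcard : Nat.card (zpowers g) = Nat.card (zpowers x) := by
          rw [Nat.card_zpowers, Nat.card_zpowers]; omega
        have : zpowers g = zpowers x :=
          SetLike.ext' (Set.eq_of_subset_of_ncard_le h1
            (by rw [← Nat.card_coe_set_eq, ← Nat.card_coe_set_eq]
                exact le_of_eq hcard.symm) (Set.toFinite _))
        show x ∈ zpowers g
        rw [this]; exact mem_zpowers x
    refine ⟨hcyc, ?_⟩
    by_contra hcon
    push_neg at hcon
    obtain ⟨h1, h2⟩ := hcon
    have hcard : Nat.card G = Fintype.card G := Nat.card_eq_fintype_card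
    -- find two distinct primes dividing the order
    have hp : (Nat.card G).minFac.Prime := Nat.minFac_prime h1
    set p := (Nat.card G).minFac with hpdef
    have hppos : 0 < Nat.card G := Nat.card_pos
    have hpdvd : p ∣ Nat.card G := Nat.minFac_dvd _
    set m := ordCompl[p] (Nat.card G) with hmdef
    have hm1 : m ≠ 1 := by
      intro hm1
      apply h2
      have heq := Nat.ordProj_mul_ordCompl_eq_self (Nat.card G) p
      rw [← hmdef, hm1, mul_one] at heq
      exact ⟨p, (Nat.card G).factorization p, hp.prime,
        Nat.Prime.factorization_pos_of_dvd hp (by omega) hpdvd, heq⟩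
    have hmdvd : m ∣ Nat.card G := Nat.ordCompl_dvd _ _
    set q := m.minFac with hqdef
    have hq : q.Prime := Nat.minFac_prime hm1
    have hqdvd : q ∣ Nat.card G := (Nat.minFac_dvd m).trans hmdvd
    have hqp : q ≠ p := by
      intro hqp
      have : p ∣ m := hqp ▸ Nat.minFac_dvd m
      exact Nat.not_dvd_ordCompl hp (by omega) this
    haveI := Fact.mk hp
    haveI := Fact.mk hq
    obtain ⟨u, hu⟩ := exists_prime_orderOf_dvd_card p (by rwa [← hcard])
    obtain ⟨v, hv⟩ := exists_prime_orderOf_dvd_card q (by rwa [← hcard])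
    have huv : u ≠ v := fun e => hqp (by rw [← hu, ← hv, e])
    rcases hadj u v huv with ⟨n, -, rfl⟩ | ⟨n, -, rfl⟩
    · have : orderOf (u ^ n) ∣ orderOf u := orderOf_pow_dvd n
      rw [hu, hv] at this
      exact hqp ((Nat.prime_dvd_prime_iff_eq hq hp).mp this)
    · have : orderOf (v ^ n) ∣ orderOf v := orderOf_pow_dvd n
      rw [hu, hv] at this
      exact hqp ((Nat.prime_dvd_prime_iff_eq hp hq).mp this).symm
  · rintro ⟨hcyc, hcard⟩
    ext u v
    simp only [SimpleGraph.top_adj]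
    constructor
    · exact fun h => h.1
    · intro huv
      refine ⟨huv, ?_⟩
      rcases hcard with h1 | ⟨p, k, hp, hk, hpk⟩
      · have : Subsingleton G := (Nat.card_eq_one_iff_unique.mp h1).1
        exact absurd (Subsingleton.elim u v) huv
      · have hp' : p.Prime := hp.nat_prime
        have hu : orderOf u ∣ p ^ k := hpk ▸ orderOf_dvd_natCard u
        have hv : orderOf v ∣ p ^ k := hpk ▸ orderOf_dvd_natCard v
        obtain ⟨i, hi, hiu⟩ := (Nat.dvd_prime_pow hp').mp hu
        obtain ⟨j, hj, hjv⟩ := (Nat.dvd_prime_pow hp').mp hv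
        rcases le_total i j with hij | hij
        · right
          exact adj_of_orderOf_dvd (by rw [hiu, hjv]; exact pow_dvd_pow p hij)
        · left
          exact adj_of_orderOf_dvd (by rw [hiu, hjv]; exact pow_dvd_pow p hij)
end
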